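/- arXiv:1511.08511 — 4 statements merged into one kernel-verified Lean document; each statement's English description precedes it below -/
import Mathlib

section
/- The set V_B = { u ∈ H¹(0,1) : u(0) = 0 and ∑_{b∈B} u(b)² < ∞ }, equipped with the inner product ⟨u,v⟩ = ∫₀¹ u' v' + ∑_{b∈B} u(b) v(b), is a Hilbert space (i.e., it is complete). -/
open MeasureTheory Filter Set Topology
open scoped ENNReal

noncomputable section

instance : IsFiniteMeasure (volume.restrict (Set.Ioo (0:ℝ) 1)) :=
  ⟨by simp [Real.volume_Ioo]⟩

private lemma stmt2.lemA (a b : ℝ → ℝ)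
    (ha : MemLp a 2 (volume.restrict (Set.Ioo (0:ℝ) 1)))
    (hb : MemLp b 2 (volume.restrict (Set.Ioo (0:ℝ) 1))) :
    ∫ x, (a x - b x)^2 ∂(volume.restrict (Set.Ioo (0:ℝ) 1))
      = ‖ha.toLp a - hb.toLp b‖^2 := by
  rw [← MemLp.toLp_sub]
  rw [← real_inner_self_eq_norm_sq]
  rw [MeasureTheory.L2.inner_def]
  refine integral_congr_ae ?_
  filter_upwards [MemLp.coeFn_toLp (ha.sub hb)] with x hx
  simp [hx, sq]

private lemma stmt2.lemB (g : Lp ℝ 2 (volume.restrict (Set.Ioo (0:ℝ) 1))) (b : ℝ)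
    (hb : b ∈ Set.Icc (0:ℝ) 1) :
    |∫ t in Set.Ioo (0:ℝ) b, (g : ℝ → ℝ) t ∂(volume.restrict (Set.Ioo (0:ℝ) 1))| ≤ ‖g‖ := by
  set ind : ℝ → ℝ := (Set.Ioo (0:ℝ) b).indicator (fun _ => (1:ℝ)) with hind
  have hmi : MemLp ind 2 (volume.restrict (Set.Ioo (0:ℝ) 1)) :=
    (memLp_const (1:ℝ)).indicator measurableSet_Ioo
  have h1 : (inner (𝕜 := ℝ) (hmi.toLp ind) g)
      = ∫ t in Set.Ioo (0:ℝ) b, (g : ℝ → ℝ) t ∂(volume.restrict (Set.Ioo (0:ℝ) 1)) := by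
    rw [MeasureTheory.L2.inner_def,
      ← integral_indicator (f := fun t => (g : ℝ → ℝ) t) measurableSet_Ioo]
    refine integral_congr_ae ?_
    filter_upwards [hmi.coeFn_toLp] with x hx
    rw [RCLike.inner_apply]
    simp only [hx, starRingEnd_apply]
    simp only [hind]
    by_cases h : x ∈ Set.Ioo (0:ℝ) b <;> simp [h]
  have h2 : ‖hmi.toLp ind‖ ≤ 1 := by
    rw [Lp.norm_toLp]
    have hle : eLpNorm ind 2 (volume.restrict (Set.Ioo (0:ℝ) 1)) ≤ 1 := by
      have hbd : ∀ᵐ x ∂(volume.restrict (Set.Ioo (0:ℝ) 1)), ‖ind x‖ ≤ (1:ℝ) :=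
        Filter.Eventually.of_forall (fun x => by
          by_cases h : x ∈ Set.Ioo (0:ℝ) b <;> simp [hind, h])
      refine (eLpNorm_le_of_ae_bound hbd).trans ?_
      simp [Real.volume_Ioo, Measure.restrict_apply_univ]
    calc (eLpNorm ind 2 (volume.restrict (Set.Ioo (0:ℝ) 1))).toReal
        ≤ (1 : ℝ≥0∞).toReal := ENNReal.toReal_mono (by simp) hle
      _ = 1 := by simp
  calc |∫ t in Set.Ioo (0:ℝ) b, (g : ℝ → ℝ) t ∂(volume.restrict (Set.Ioo (0:ℝ) 1))|
      = |(inner (𝕜 := ℝ) (hmi.toLp ind) g)| := by rw [h1]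
    _ ≤ ‖hmi.toLp ind‖ * ‖g‖ := abs_real_inner_le_norm _ _
    _ ≤ 1 * ‖g‖ := by nlinarith [norm_nonneg g]
    _ = ‖g‖ := one_mul _

private lemma stmt2.lemC {B : Set ℝ} (T : lp (fun _ : B => ℝ) 2) :
    ‖T‖^2 = ∑' b : B, (T b)^2 := by
  have h := lp.norm_rpow_eq_tsum (p := 2) (by norm_num) T
  have h2 : ‖T‖ ^ (2:ℝ≥0∞).toReal = ‖T‖ ^ 2 := by
    norm_num [Real.rpow_natCast ‖T‖ 2]
  rw [h2] at h
  rw [h]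
  refine tsum_congr fun b => ?_
  have : ‖T b‖ ^ (2:ℝ≥0∞).toReal = ‖T b‖ ^ 2 := by
    norm_num [Real.rpow_natCast ‖T b‖ 2]
  rw [this, Real.norm_eq_abs, sq_abs]

private lemma stmt2.lemD {B : Set ℝ} (f : B → ℝ) (hf : Summable fun b => (f b)^2) :
    Memℓp f 2 := by
  refine memℓp_gen ?_
  refine hf.congr fun b => ?_
  have : ‖f b‖ ^ (2:ℝ≥0∞).toReal = ‖f b‖ ^ 2 := by
    norm_num [Real.rpow_natCast ‖f b‖ 2]
  rw [Real.norm_eq_abs, sq_abs] at this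
  exact this.symm

end

/-- Completeness of the fractal interface space
V_B = { u ∈ H¹(0,1) : u(0) = 0, ∑_{b∈B} u(b)² < ∞ } with the norm
‖u‖² = ∫₀¹ (u')² + ∑_{b∈B} u(b)²: every Cauchy sequence has a limit in V_B. -/
theorem stmt2 (B : Set ℝ) (hBcount : B.Countable) (hB : B ⊆ Set.Icc (0:ℝ) 1)
    (u du : ℕ → ℝ → ℝ)
    (hmem : ∀ n, MemLp (du n) 2 (volume.restrict (Set.Ioo (0:ℝ) 1)))
    (hrep : ∀ n x, u n x = ∫ t in (0:ℝ)..x, du n t)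
    (hsum : ∀ n, Summable (fun b : B => (u n (b : ℝ))^2))
    (hcauchy : ∀ ε > (0:ℝ), ∃ N : ℕ, ∀ m ≥ N, ∀ n ≥ N,
      (∫ x in Set.Ioo (0:ℝ) 1, (du m x - du n x)^2)
        + (∑' b : B, (u m (b : ℝ) - u n (b : ℝ))^2) < ε) :
    ∃ v dv : ℝ → ℝ,
      MemLp dv 2 (volume.restrict (Set.Ioo (0:ℝ) 1)) ∧
      (∀ x, v x = ∫ t in (0:ℝ)..x, dv t) ∧
      Summable (fun b : B => (v (b : ℝ))^2) ∧
      Tendsto (fun n => (∫ x in Set.Ioo (0:ℝ) 1, (du n x - dv x)^2)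
        + ∑' b : B, (u n (b : ℝ) - v (b : ℝ))^2) atTop (𝓝 0) := by
  classical
  -- basic positivity facts
  have hInt0 : ∀ m n, 0 ≤ ∫ x in Set.Ioo (0:ℝ) 1, (du m x - du n x)^2 :=
    fun m n => integral_nonneg (fun x => sq_nonneg _)
  have hTsum0 : ∀ m n, 0 ≤ ∑' b : B, (u m (b : ℝ) - u n (b : ℝ))^2 :=
    fun m n => tsum_nonneg (fun b => sq_nonneg _)
  -- the L² part
  set F : ℕ → Lp ℝ 2 (volume.restrict (Set.Ioo (0:ℝ) 1)) :=
    fun n => (hmem n).toLp (du n) with hF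
  have hFc : CauchySeq F := by
    rw [Metric.cauchySeq_iff]
    intro ε hε
    obtain ⟨N, hN⟩ := hcauchy (ε^2) (by positivity)
    refine ⟨N, fun m hm n hn => ?_⟩
    have h := hN m hm n hn
    have hI : (∫ x in Set.Ioo (0:ℝ) 1, (du m x - du n x)^2) < ε^2 := by
      have := hTsum0 m n; linarith
    rw [stmt2.lemA _ _ (hmem m) (hmem n)] at hI
    rw [dist_eq_norm]
    nlinarith [norm_nonneg (F m - F n)]
  obtain ⟨f, hf⟩ := cauchySeq_tendsto_of_complete hFc
  have hfnorm : Tendsto (fun n => ‖F n - f‖) atTop (𝓝 0) :=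
    (tendsto_iff_norm_sub_tendsto_zero.mp hf)
  set dv : ℝ → ℝ := (f : ℝ → ℝ) with hdv
  set v : ℝ → ℝ := fun x => ∫ t in (0:ℝ)..x, dv t with hv
  -- the ℓ² part
  set T : ℕ → lp (fun _ : B => ℝ) 2 :=
    fun n => ⟨fun b => u n (b : ℝ), stmt2.lemD _ (hsum n)⟩ with hT
  have hTapp : ∀ n (b : B), (T n : B → ℝ) b = u n (b : ℝ) := fun n b => rfl
  have hTsub : ∀ m n, ‖T m - T n‖^2 = ∑' b : B, (u m (b : ℝ) - u n (b : ℝ))^2 := by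
    intro m n
    rw [stmt2.lemC]
    refine tsum_congr fun b => ?_
    congr 1
  have hTc : CauchySeq T := by
    rw [Metric.cauchySeq_iff]
    intro ε hε
    obtain ⟨N, hN⟩ := hcauchy (ε^2) (by positivity)
    refine ⟨N, fun m hm n hn => ?_⟩
    have h := hN m hm n hn
    have hI : (∑' b : B, (u m (b : ℝ) - u n (b : ℝ))^2) < ε^2 := by
      have := hInt0 m n; linarith
    rw [← hTsub] at hI
    rw [dist_eq_norm]
    nlinarith [norm_nonneg (T m - T n)]
  obtain ⟨S, hS⟩ := cauchySeq_tendsto_of_complete hTc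
  have hSnorm : Tendsto (fun n => ‖T n - S‖) atTop (𝓝 0) :=
    (tendsto_iff_norm_sub_tendsto_zero.mp hS)
  -- pointwise convergence to S
  have hptS : ∀ b : B, Tendsto (fun n => u n (b : ℝ)) atTop (𝓝 (S b)) := by
    intro b
    rw [← tendsto_sub_nhds_zero_iff]
    refine squeeze_zero_norm (fun n => ?_) hSnorm
    have := lp.norm_apply_le_norm (E := fun _ : B => ℝ) (p := 2) two_ne_zero (T n - S) b
    simpa [hTapp] using this
  -- pointwise convergence to v
  have hIoosub : ∀ b : ℝ, b ∈ Set.Icc (0:ℝ) 1 → Set.Ioo (0:ℝ) b ⊆ Set.Ioo (0:ℝ) 1 :=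
    fun b hb x hx => ⟨hx.1, lt_of_lt_of_le hx.2 hb.2⟩
  have hrestrict : ∀ b : ℝ, b ∈ Set.Icc (0:ℝ) 1 →
      (volume.restrict (Set.Ioo (0:ℝ) 1)).restrict (Set.Ioo (0:ℝ) b)
        = volume.restrict (Set.Ioo (0:ℝ) b) := by
    intro b hb
    rw [Measure.restrict_restrict measurableSet_Ioo, Set.inter_eq_left.mpr (hIoosub b hb)]
  have hkey : ∀ (w : ℝ → ℝ) (hw : MemLp w 2 (volume.restrict (Set.Ioo (0:ℝ) 1)))
      (b : ℝ), b ∈ Set.Icc (0:ℝ) 1 →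
      (∫ t in (0:ℝ)..b, w t)
        = ∫ t in Set.Ioo (0:ℝ) b, w t ∂(volume.restrict (Set.Ioo (0:ℝ) 1)) := by
    intro w hw b hb
    rw [intervalIntegral.integral_of_le hb.1, MeasureTheory.integral_Ioc_eq_integral_Ioo,
      hrestrict b hb]
  have hptv : ∀ b : ℝ, b ∈ Set.Icc (0:ℝ) 1 →
      Tendsto (fun n => u n b) atTop (𝓝 (v b)) := by
    intro b hb
    rw [← tendsto_sub_nhds_zero_iff]
    refine squeeze_zero_norm (fun n => ?_) hfnorm
    have hdvmem : MemLp dv 2 (volume.restrict (Set.Ioo (0:ℝ) 1)) := Lp.memLp f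
    have e1 : u n b - v b
        = ∫ t in Set.Ioo (0:ℝ) b, (du n t - dv t) ∂(volume.restrict (Set.Ioo (0:ℝ) 1)) := by
      rw [hrep n b, hv]
      simp only
      rw [hkey (du n) (hmem n) b hb, hkey dv hdvmem b hb]
      rw [← integral_sub (((hmem n).integrable (by norm_num)).restrict)
        ((hdvmem.integrable (by norm_num)).restrict)]
    have e2 : (∫ t in Set.Ioo (0:ℝ) b, (du n t - dv t) ∂(volume.restrict (Set.Ioo (0:ℝ) 1)))
        = ∫ t in Set.Ioo (0:ℝ) b, ((F n - f : Lp ℝ 2 (volume.restrict (Set.Ioo (0:ℝ) 1))) : ℝ → ℝ) t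
            ∂(volume.restrict (Set.Ioo (0:ℝ) 1)) := by
      refine integral_congr_ae ?_
      have hae : ((F n - f : Lp ℝ 2 (volume.restrict (Set.Ioo (0:ℝ) 1))) : ℝ → ℝ)
          =ᵐ[volume.restrict (Set.Ioo (0:ℝ) 1)] fun t => du n t - dv t := by
        filter_upwards [Lp.coeFn_sub (F n) f, (hmem n).coeFn_toLp] with x h1 h2
        rw [h1, Pi.sub_apply, h2]
      exact ae_restrict_of_ae hae.symm
    rw [Real.norm_eq_abs, e1, e2]
    exact stmt2.lemB (F n - f) b hb
  -- S and v agree on B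
  have hSv : ∀ b : B, S b = v (b : ℝ) :=
    fun b => tendsto_nhds_unique (hptS b) (hptv (b : ℝ) (hB b.2))
  refine ⟨v, dv, Lp.memLp f, fun x => rfl, ?_, ?_⟩
  · -- summability of (v b)^2
    have hsummS := (lp.memℓp S).summable (p := 2) (by norm_num)
    refine (hsummS.congr fun b => ?_)
    rw [← hSv b]
    rw [show ((2:ℝ≥0∞).toReal) = ((2:ℕ):ℝ) by norm_num, Real.rpow_natCast,
      Real.norm_eq_abs, sq_abs]
  · -- the main convergence
    have heq : ∀ n, (∫ x in Set.Ioo (0:ℝ) 1, (du n x - dv x)^2)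
        + (∑' b : B, (u n (b : ℝ) - v (b : ℝ))^2) = ‖F n - f‖^2 + ‖T n - S‖^2 := by
      intro n
      congr 1
      · rw [stmt2.lemA (du n) dv (hmem n) (Lp.memLp f)]
        rw [MeasureTheory.Lp.toLp_coeFn f (Lp.memLp f)]
      · rw [stmt2.lemC]
        refine tsum_congr fun b => ?_
        rw [← hSv b]
        congr 1
    have : Tendsto (fun n => ‖F n - f‖^2 + ‖T n - S‖^2) atTop (𝓝 0) := by
      have h1 : Tendsto (fun n => ‖F n - f‖^2) atTop (𝓝 0) := by
        have := hfnorm.pow 2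
        simpa using this
      have h2 : Tendsto (fun n => ‖T n - S‖^2) atTop (𝓝 0) := by
        have := hSnorm.pow 2
        simpa using this
      simpa using h1.add h2
    exact this.congr (fun n => (heq n).symm)
end

section
/- With V = {u ∈ H¹(0,1) : u(0)=0}, let B_n ⊆ (0,1) be finite, β > 0, F ∈ L²(0,1), f : B → ℝ with ∑_{b∈B} f(b)² < ∞ where B ⊇ B_n. If p_n ∈ V solves ∫₀¹ p_n' q' + β ∑_{b∈B_n} p_n(b) q(b) = ∫₀¹ F q + ∑_{b∈B_n} f(b) q(b) for all q ∈ V, then both ‖p_n‖_V and (∑_{b∈B_n} p_n(b)²)^{1/2} are bounded by (1/min{1,β}) (‖F‖²_{L²(0,1)} + ‖f‖²_{ℓ²(B)})^{1/2}. -/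
open MeasureTheory Filter Set Topology


lemma my_L2CS {α : Type*} {m : MeasurableSpace α} {μ : Measure α} {f g : α → ℝ}
    (hf : MemLp f 2 μ) (hg : MemLp g 2 μ) :
    ∫ x, f x * g x ∂μ ≤ Real.sqrt (∫ x, (f x)^2 ∂μ) * Real.sqrt (∫ x, (g x)^2 ∂μ) := by
  have h2 : Real.HolderConjugate 2 2 := Real.HolderConjugate.two_two
  have hf2 : MemLp f (ENNReal.ofReal 2) μ := by simpa [ENNReal.ofReal_ofNat] using hf
  have hg2 : MemLp g (ENNReal.ofReal 2) μ := by simpa [ENNReal.ofReal_ofNat] using hg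
  have H := MeasureTheory.integral_mul_norm_le_Lp_mul_Lq h2 hf2 hg2
  have e1 : ∫ a, ‖f a‖ ^ (2:ℝ) ∂μ = ∫ x, (f x)^2 ∂μ := by
    apply integral_congr_ae; filter_upwards with x
    rw [show ((2:ℝ)) = ((2:ℕ):ℝ) by norm_num, Real.rpow_natCast, Real.norm_eq_abs, sq_abs]
  have e2 : ∫ a, ‖g a‖ ^ (2:ℝ) ∂μ = ∫ x, (g x)^2 ∂μ := by
    apply integral_congr_ae; filter_upwards with x
    rw [show ((2:ℝ)) = ((2:ℕ):ℝ) by norm_num, Real.rpow_natCast, Real.norm_eq_abs, sq_abs]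
  rw [e1, e2] at H
  calc ∫ x, f x * g x ∂μ ≤ ‖∫ x, f x * g x ∂μ‖ := le_abs_self _
    _ ≤ ∫ x, ‖f x * g x‖ ∂μ := norm_integral_le_integral_norm _
    _ = ∫ x, ‖f x‖ * ‖g x‖ ∂μ := by simp [norm_mul]
    _ ≤ (∫ x, (f x)^2 ∂μ) ^ (1/2:ℝ) * (∫ x, (g x)^2 ∂μ) ^ (1/2:ℝ) := H
    _ = _ := by rw [← Real.sqrt_eq_rpow, ← Real.sqrt_eq_rpow]

lemma my_cs2 (u v w z : ℝ) (hu : 0 ≤ u) (hv : 0 ≤ v) (hw : 0 ≤ w) (hz : 0 ≤ z) :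
    u*v + w*z ≤ Real.sqrt (u^2 + w^2) * Real.sqrt (v^2 + z^2) := by
  rw [← Real.sqrt_mul (by positivity)]
  have h : (u*v + w*z)^2 ≤ (u^2 + w^2) * (v^2 + z^2) := by nlinarith [sq_nonneg (u*z - w*v)]
  have h2 := Real.sqrt_le_sqrt h
  rwa [Real.sqrt_sq (by positivity)] at h2

lemma my_bound {p' : ℝ → ℝ} (hmem : MemLp p' 2 (volume.restrict (Set.Ioo (0:ℝ) 1)))
    {x : ℝ} (hx : x ∈ Set.Icc (0:ℝ) 1) :
    |∫ t in (0:ℝ)..x, p' t| ≤ Real.sqrt (∫ t in Set.Ioo (0:ℝ) 1, (p' t)^2) := by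
  set X := ∫ t in Set.Ioo (0:ℝ) 1, (p' t)^2 with hXdef
  have hX0 : 0 ≤ X := setIntegral_nonneg measurableSet_Ioo (fun t _ => sq_nonneg _)
  have hle : volume.restrict (Set.Ioc 0 x) ≤ volume.restrict (Set.Ioo (0:ℝ) 1) := by
    rw [← Measure.restrict_congr_set Ioo_ae_eq_Ioc]
    exact Measure.restrict_mono (Set.Ioo_subset_Ioo le_rfl hx.2) le_rfl
  have hmem' : MemLp p' 2 (volume.restrict (Set.Ioc 0 x)) := hmem.mono_measure hle
  have habs : MemLp (fun t => |p' t|) 2 (volume.restrict (Set.Ioc 0 x)) := by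
    simpa [Real.norm_eq_abs] using hmem'.norm
  have hone : MemLp (fun _ : ℝ => (1:ℝ)) 2 (volume.restrict (Set.Ioc 0 x)) := memLp_const 1
  have hCS := my_L2CS habs hone
  simp only [mul_one, one_pow] at hCS
  have hmeasx : ∫ t in Set.Ioc 0 x, (1:ℝ) = x := by
    simp [Real.volume_Ioc, hx.1]
  rw [hmeasx] at hCS
  have hIoc_le : ∫ t in Set.Ioc 0 x, |p' t|^2 ≤ X := by
    have hsub : Set.Ioc 0 x ≤ᵐ[volume] Set.Ioo (0:ℝ) 1 := by
      rw [ae_le_set]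
      refine measure_mono_null (fun t ht => ?_) (measure_singleton (1:ℝ))
      simp only [Set.mem_diff, Set.mem_Ioc, Set.mem_Ioo, not_and, not_lt] at ht
      have := ht.2 ht.1.1
      simp only [Set.mem_singleton_iff]
      linarith [ht.1.2, hx.2]
    have hint : IntegrableOn (fun t => |p' t|^2) (Set.Ioo (0:ℝ) 1) volume := by
      simpa [sq_abs, IntegrableOn] using hmem.integrable_sq
    calc ∫ t in Set.Ioc 0 x, |p' t|^2
        ≤ ∫ t in Set.Ioo (0:ℝ) 1, |p' t|^2 :=
          setIntegral_mono_set hint (Eventually.of_forall fun t => sq_nonneg _) hsub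
      _ = X := by rw [hXdef]; simp only [sq_abs]
  calc |∫ t in (0:ℝ)..x, p' t| ≤ ∫ t in (0:ℝ)..x, |p' t| :=
        intervalIntegral.abs_integral_le_integral_abs hx.1
    _ = ∫ t in Set.Ioc 0 x, |p' t| := intervalIntegral.integral_of_le hx.1
    _ ≤ Real.sqrt (∫ t in Set.Ioc 0 x, |p' t|^2) * Real.sqrt x := hCS
    _ ≤ Real.sqrt X * 1 := by
        apply mul_le_mul (Real.sqrt_le_sqrt hIoc_le) _ (Real.sqrt_nonneg _) (Real.sqrt_nonneg _)
        exact Real.sqrt_le_one.mpr hx.2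
    _ = Real.sqrt X := mul_one _

/-- a priori estimate for the n-stage problem: both the V-norm of p_n and the
ℓ²-norm of its trace on B_n are bounded by (1/min{1,β})·(‖F‖²_{L²} + ‖f‖²_{ℓ²(B)})^{1/2}. -/
theorem stmt6 (B : Set ℝ) (hB : B ⊆ Set.Ioo (0:ℝ) 1)
    (Bn : Finset ℝ) (hBn : ↑Bn ⊆ B) (β : ℝ) (hβ : 0 < β)
    (F : ℝ → ℝ) (hF : MemLp F 2 (volume.restrict (Set.Ioo (0:ℝ) 1)))
    (f : ℝ → ℝ) (hf : Summable (fun b : B => (f (b : ℝ))^2))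
    (p p' : ℝ → ℝ)
    (hmem : MemLp p' 2 (volume.restrict (Set.Ioo (0:ℝ) 1)))
    (hrep : ∀ x, p x = ∫ t in (0:ℝ)..x, p' t)
    (hsol : ∀ q q' : ℝ → ℝ, MemLp q' 2 (volume.restrict (Set.Ioo (0:ℝ) 1)) →
      (∀ x, q x = ∫ t in (0:ℝ)..x, q' t) →
      (∫ x in Set.Ioo (0:ℝ) 1, p' x * q' x) + β * ∑ b ∈ Bn, p b * q b
        = (∫ x in Set.Ioo (0:ℝ) 1, F x * q x) + ∑ b ∈ Bn, f b * q b) :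
    Real.sqrt (∫ x in Set.Ioo (0:ℝ) 1, (p' x)^2)
        ≤ (1 / min 1 β) * Real.sqrt ((∫ x in Set.Ioo (0:ℝ) 1, (F x)^2)
            + ∑' b : B, (f (b : ℝ))^2) ∧
    Real.sqrt (∑ b ∈ Bn, (p b)^2)
        ≤ (1 / min 1 β) * Real.sqrt ((∫ x in Set.Ioo (0:ℝ) 1, (F x)^2)
            + ∑' b : B, (f (b : ℝ))^2) := by
  have hfact : Fact (volume (Set.Ioo (0:ℝ) 1) < ⊤) := ⟨by simp⟩
  set X := ∫ x in Set.Ioo (0:ℝ) 1, (p' x)^2 with hXdef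
  set A := ∫ x in Set.Ioo (0:ℝ) 1, (F x)^2 with hAdef
  set S := ∑ b ∈ Bn, (p b)^2 with hSdef
  set C := ∑' b : B, (f (b : ℝ))^2 with hCdef
  have hX0 : 0 ≤ X := setIntegral_nonneg measurableSet_Ioo (fun t _ => sq_nonneg _)
  have hA0 : 0 ≤ A := setIntegral_nonneg measurableSet_Ioo (fun t _ => sq_nonneg _)
  have hS0 : 0 ≤ S := Finset.sum_nonneg fun b _ => sq_nonneg _
  have hC0 : 0 ≤ C := tsum_nonneg fun b => sq_nonneg _
  have habs : ∀ x ∈ Set.Icc (0:ℝ) 1, |p x| ≤ Real.sqrt X := by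
    intro x hx; rw [hrep x]; exact my_bound hmem hx
  -- continuity / measurability of p on [0,1]
  have hintIcc : IntegrableOn p' (Set.Icc (0:ℝ) 1) volume :=
    IntegrableOn.congr_set_ae (show IntegrableOn p' (Set.Ioo (0:ℝ) 1) volume from hmem.integrable one_le_two) Ioo_ae_eq_Icc.symm
  have hcontp : ContinuousOn p (Set.Icc (0:ℝ) 1) := by
    have h := intervalIntegral.continuousOn_primitive_interval
      (f := p') (a := (0:ℝ)) (b := 1) (μ := volume)
      (by rwa [Set.uIcc_of_le zero_le_one])
    rw [Set.uIcc_of_le zero_le_one] at h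
    exact h.congr fun x _ => hrep x
  have hpmeas : AEStronglyMeasurable p (volume.restrict (Set.Ioo (0:ℝ) 1)) :=
    (hcontp.mono Set.Ioo_subset_Icc_self).aestronglyMeasurable measurableSet_Ioo
  have hpL2 : MemLp p 2 (volume.restrict (Set.Ioo (0:ℝ) 1)) := by
    refine MemLp.of_bound hpmeas (Real.sqrt X) ?_
    filter_upwards [ae_restrict_mem measurableSet_Ioo] with x hx
    rw [Real.norm_eq_abs]
    exact habs x (Set.Ioo_subset_Icc_self hx)
  set a := ∫ x in Set.Ioo (0:ℝ) 1, (p x)^2 with hadef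
  have ha0 : 0 ≤ a := setIntegral_nonneg measurableSet_Ioo (fun t _ => sq_nonneg _)
  have haX : a ≤ X := by
    have hstep : ∫ x in Set.Ioo (0:ℝ) 1, (p x)^2 ≤ ∫ _x in Set.Ioo (0:ℝ) 1, X := by
      refine setIntegral_mono_on hpL2.integrable_sq (integrableOn_const (by simp))
        measurableSet_Ioo (fun x hx => ?_)
      have h1 := habs x (Set.Ioo_subset_Icc_self hx)
      nlinarith [abs_nonneg (p x), Real.sqrt_nonneg X, Real.sq_sqrt hX0, sq_abs (p x)]
    calc a ≤ ∫ _x in Set.Ioo (0:ℝ) 1, X := hstep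
      _ = X := by simp [Real.volume_Ioo]
  -- test the equation with q = p
  have E : X + β * S = (∫ x in Set.Ioo (0:ℝ) 1, F x * p x) + ∑ b ∈ Bn, f b * p b := by
    have h := hsol p p' hmem hrep
    simpa [← pow_two] using h
  have h1 : ∫ x in Set.Ioo (0:ℝ) 1, F x * p x ≤ Real.sqrt A * Real.sqrt a :=
    my_L2CS hF hpL2
  set Cn := ∑ b ∈ Bn, (f b)^2 with hCndef
  have hCn0 : 0 ≤ Cn := Finset.sum_nonneg fun b _ => sq_nonneg _
  have h2 : ∑ b ∈ Bn, f b * p b ≤ Real.sqrt Cn * Real.sqrt S := by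
    have h := Finset.sum_mul_sq_le_sq_mul_sq Bn f p
    calc ∑ b ∈ Bn, f b * p b ≤ |∑ b ∈ Bn, f b * p b| := le_abs_self _
      _ = Real.sqrt ((∑ b ∈ Bn, f b * p b)^2) := (Real.sqrt_sq_eq_abs _).symm
      _ ≤ Real.sqrt (Cn * S) := Real.sqrt_le_sqrt h
      _ = Real.sqrt Cn * Real.sqrt S := Real.sqrt_mul hCn0 _
  have hCnC : Cn ≤ C := by
    set s : Finset B := Bn.attach.map
      ⟨fun x => (⟨x.1, hBn x.2⟩ : B), fun x y hxy => Subtype.ext (by simpa using congrArg Subtype.val hxy)⟩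
      with hsdef
    have hsum : ∑ b ∈ s, (f (b : ℝ))^2 = Cn := by
      rw [hsdef, Finset.sum_map]
      show ∑ x ∈ Bn.attach, (f x.1)^2 = Cn
      rw [hCndef]
      exact Finset.sum_attach Bn (fun b => (f b)^2)
    have h := hf.sum_le_tsum s (fun b _ => sq_nonneg _)
    rw [hsum] at h
    exact h
  set m := min 1 β with hmdef
  have hm : 0 < m := lt_min one_pos hβ
  have key : m * (X + S) ≤ Real.sqrt (A + C) * Real.sqrt (X + S) := by
    have hm1 : m ≤ 1 := min_le_left _ _
    have hmβ : m ≤ β := min_le_right _ _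
    calc m * (X + S) ≤ X + β * S := by nlinarith
      _ = (∫ x in Set.Ioo (0:ℝ) 1, F x * p x) + ∑ b ∈ Bn, f b * p b := E
      _ ≤ Real.sqrt A * Real.sqrt a + Real.sqrt Cn * Real.sqrt S := add_le_add h1 h2
      _ ≤ Real.sqrt A * Real.sqrt X + Real.sqrt C * Real.sqrt S :=
          add_le_add
            (mul_le_mul_of_nonneg_left (Real.sqrt_le_sqrt haX) (Real.sqrt_nonneg A))
            (mul_le_mul_of_nonneg_right (Real.sqrt_le_sqrt hCnC) (Real.sqrt_nonneg S))
      _ ≤ Real.sqrt (A + C) * Real.sqrt (X + S) := by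
          have h := my_cs2 (Real.sqrt A) (Real.sqrt X) (Real.sqrt C) (Real.sqrt S)
            (Real.sqrt_nonneg _) (Real.sqrt_nonneg _) (Real.sqrt_nonneg _) (Real.sqrt_nonneg _)
          rwa [Real.sq_sqrt hA0, Real.sq_sqrt hX0, Real.sq_sqrt hC0, Real.sq_sqrt hS0] at h
  have main : Real.sqrt (X + S) ≤ (1 / m) * Real.sqrt (A + C) := by
    rcases eq_or_lt_of_le (Real.sqrt_nonneg (X + S)) with h0 | h0
    · rw [← h0]; positivity
    · have hTsq : Real.sqrt (X + S) * Real.sqrt (X + S) = X + S :=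
        Real.mul_self_sqrt (by linarith)
      have hm' : m * Real.sqrt (X + S) ≤ Real.sqrt (A + C) := by
        refine le_of_mul_le_mul_right ?_ h0
        nlinarith
      calc Real.sqrt (X + S) = (1 / m) * (m * Real.sqrt (X + S)) := by field_simp
        _ ≤ (1 / m) * Real.sqrt (A + C) := by
            apply mul_le_mul_of_nonneg_left hm' (by positivity)
  constructor
  · exact le_trans (Real.sqrt_le_sqrt (by linarith)) main
  · exact le_trans (Real.sqrt_le_sqrt (by linarith)) main
end

section
/- Let B be a countable subset of (0,1) and suppose (p_n) ⊆ V = {u ∈ H¹(0,1): u(0)=0} converges weakly in V to ξ ∈ V; suppose in addition that B_n ↑ B are finite subsets and that the traces satisfy sup_n ∑_{b∈B_n} p_n(b)² < ∞. Then ∑_{b∈B} ξ(b)² < ∞ and, for every u ∈ ℓ²(B), ∑_{b∈B_n} p_n(b) u(b) → ∑_{b∈B} ξ(b) u(b). -/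
open MeasureTheory Filter Set Topology

private lemma amgm_abs (a b : ℝ) : |a * b| ≤ (a^2 + b^2)/2 := by
  rw [abs_mul]
  nlinarith [sq_nonneg (|a| - |b|), sq_abs a, sq_abs b, abs_nonneg a, abs_nonneg b]

/-- if p_n ⇀ ξ weakly in V = {u ∈ H¹(0,1): u(0)=0}, B_n ↑ B are finite and
sup_n ∑_{b∈B_n} p_n(b)² < ∞, then ξ|_B ∈ ℓ²(B) and ∑_{b∈B_n} p_n(b)u(b) → ∑_{b∈B} ξ(b)u(b)
for every u ∈ ℓ²(B). -/
theorem stmt7 (B : Set ℝ) (hBcount : B.Countable) (hB : B ⊆ Set.Ioo (0:ℝ) 1)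
    (Bn : ℕ → Finset ℝ) (hmono : Monotone Bn)
    (hsub : ∀ n, ↑(Bn n) ⊆ B) (hcover : ∀ b ∈ B, ∃ n, b ∈ Bn n)
    (p : ℕ → ℝ → ℝ) (dp : ℕ → ℝ → ℝ)
    (hmem : ∀ n, MemLp (dp n) 2 (volume.restrict (Set.Ioo (0:ℝ) 1)))
    (hrep : ∀ n x, p n x = ∫ t in (0:ℝ)..x, dp n t)
    (ξ ξ' : ℝ → ℝ)
    (hξmem : MemLp ξ' 2 (volume.restrict (Set.Ioo (0:ℝ) 1)))
    (hξrep : ∀ x, ξ x = ∫ t in (0:ℝ)..x, ξ' t)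
    (hweak : ∀ g : ℝ → ℝ, MemLp g 2 (volume.restrict (Set.Ioo (0:ℝ) 1)) →
      Tendsto (fun n => ∫ x in Set.Ioo (0:ℝ) 1, dp n x * g x) atTop
        (𝓝 (∫ x in Set.Ioo (0:ℝ) 1, ξ' x * g x)))
    (hbdd : ∃ C : ℝ, ∀ n, ∑ b ∈ Bn n, (p n b)^2 ≤ C) :
    Summable (fun b : B => (ξ (b : ℝ))^2) ∧
    ∀ u : ℝ → ℝ, Summable (fun b : B => (u (b : ℝ))^2) →
      Tendsto (fun n => ∑ b ∈ Bn n, p n b * u b) atTop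
        (𝓝 (∑' b : B, ξ (b : ℝ) * u (b : ℝ))) := by
  classical
  obtain ⟨C, hC⟩ := hbdd
  set C' : ℝ := max C 0 with hC'def
  have hC' : ∀ n, ∑ b ∈ Bn n, (p n b)^2 ≤ C' := fun n => (hC n).trans (le_max_left _ _)
  have hC'0 : 0 ≤ C' := le_max_right _ _
  -- pointwise convergence p n b → ξ b
  have L1 : ∀ b ∈ Set.Ioo (0:ℝ) 1, Tendsto (fun n => p n b) atTop (𝓝 (ξ b)) := by
    intro b hb
    set g : ℝ → ℝ := (Set.Ioo (0:ℝ) b).indicator (fun _ => 1) with hg_def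
    have hg : MemLp g 2 (volume.restrict (Set.Ioo (0:ℝ) 1)) := by
      refine memLp_indicator_const 2 measurableSet_Ioo 1 (Or.inr (ne_of_lt ?_))
      rw [Measure.restrict_apply measurableSet_Ioo]
      exact lt_of_le_of_lt (measure_mono Set.inter_subset_left) measure_Ioo_lt_top
    have key : ∀ f : ℝ → ℝ, ∫ x in Set.Ioo (0:ℝ) 1, f x * g x = ∫ t in (0:ℝ)..b, f t := by
      intro f
      have h1 : (fun x => f x * g x) = (Set.Ioo (0:ℝ) b).indicator f := by
        funext x
        by_cases hx : x ∈ Set.Ioo (0:ℝ) b <;> simp [hg_def, Set.indicator_apply, hx]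
      rw [h1, integral_indicator measurableSet_Ioo, Measure.restrict_restrict measurableSet_Ioo,
        Set.inter_eq_left.mpr (Set.Ioo_subset_Ioo le_rfl hb.2.le),
        intervalIntegral.integral_of_le hb.1.le, integral_Ioc_eq_integral_Ioo]
    have h := hweak g hg
    rw [show (∫ x in Set.Ioo (0:ℝ) 1, ξ' x * g x) = ξ b from (key ξ').trans (hξrep b).symm] at h
    exact h.congr (fun n => (key (dp n)).trans (hrep n b).symm)
  -- any finite subset of B is absorbed by some Bn m
  have L2 : ∀ F : Finset ℝ, ↑F ⊆ B → ∃ m, ↑F ⊆ ↑(Bn m) := by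
    intro F
    induction F using Finset.induction_on with
    | empty => intro _; exact ⟨0, by simp⟩
    | insert _ _ ha ih =>
      rename_i a s
      intro hF
      obtain ⟨m1, hm1⟩ := ih (fun x hx => hF (Finset.mem_insert_of_mem hx))
      obtain ⟨m2, hm2⟩ := hcover a (hF (Finset.mem_insert_self a s))
      refine ⟨max m1 m2, ?_⟩
      intro x hx
      rcases Finset.mem_insert.mp hx with rfl | hx
      · exact hmono (le_max_right m1 m2) hm2
      · exact hmono (le_max_left m1 m2) (hm1 hx)
  -- bound on finite sums of ξ²
  have L3 : ∀ F : Finset ℝ, ↑F ⊆ B → ∑ b ∈ F, (ξ b)^2 ≤ C' := by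
    intro F hF
    obtain ⟨m, hm⟩ := L2 F hF
    have htend : Tendsto (fun n => ∑ b ∈ F, (p n b)^2) atTop (𝓝 (∑ b ∈ F, (ξ b)^2)) :=
      tendsto_finset_sum _ (fun b hb => (L1 b (hB (hF hb))).pow 2)
    refine le_of_tendsto htend ?_
    filter_upwards [eventually_ge_atTop m] with n hn
    calc ∑ b ∈ F, (p n b)^2
        ≤ ∑ b ∈ Bn n, (p n b)^2 := by
          refine Finset.sum_le_sum_of_subset_of_nonneg ?_ (fun i _ _ => sq_nonneg _)
          intro x hx
          exact hmono hn (hm hx)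
      _ ≤ C' := hC' n
  -- conversion: finsets of ℝ inside B to finsets of the subtype
  have toB : ∀ G : Finset ℝ, ↑G ⊆ B → ∃ G' : Finset B,
      (∀ f : ℝ → ℝ, ∑ b ∈ G', f ↑b = ∑ x ∈ G, f x) ∧ (∀ b : B, b ∈ G' → (b : ℝ) ∈ G) := by
    intro G hG
    refine ⟨G.attach.image (fun x => (⟨x.1, hG x.2⟩ : B)), ?_, ?_⟩
    · intro f
      rw [Finset.sum_image (by intro x _ y _ h; exact Subtype.ext (Subtype.mk_eq_mk.mp h))]
      exact Finset.sum_attach G (fun x => f x)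
    · intro b hb
      obtain ⟨x, _, rfl⟩ := Finset.mem_image.mp hb
      exact x.2
  have hsumξ : Summable (fun b : B => (ξ (b : ℝ))^2) := by
    refine summable_of_sum_le (fun b => sq_nonneg _) (fun s => ?_) (c := C')
    have hinj : Set.InjOn Subtype.val (s : Set B) := fun x _ y _ h => Subtype.ext h
    have himg : ∑ x ∈ s.image (Subtype.val : ↑B → ℝ), (ξ x)^2 = ∑ b ∈ s, (ξ (b:ℝ))^2 :=
      Finset.sum_image (fun x _ y _ h => Subtype.ext h)
    rw [← himg]
    refine L3 _ ?_
    intro x hx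
    simp only [Finset.coe_image, Set.mem_image] at hx
    obtain ⟨b, _, rfl⟩ := hx
    exact b.2
  refine ⟨hsumξ, ?_⟩
  intro u hu
  have hprod : Summable (fun b : B => ξ (b:ℝ) * u (b:ℝ)) := by
    refine Summable.of_abs ?_
    refine Summable.of_nonneg_of_le (fun b => abs_nonneg _) (fun b => amgm_abs _ _)
      ((hsumξ.add hu).div_const 2)
  set S : ℝ := ∑' b : B, ξ (b:ℝ) * u (b:ℝ) with hSdef
  rw [Metric.tendsto_atTop]
  intro ε hε
  set δ : ℝ := min (ε/3) ((ε/3)^2/(C'+1)) with hδdef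
  have hδpos : 0 < δ := lt_min (by positivity) (by positivity)
  have hδ1 : δ ≤ ε/3 := min_le_left _ _
  have hδ2 : δ ≤ (ε/3)^2/(C'+1) := min_le_right _ _
  -- choose s₀ capturing most of the mass of u² and ξ²
  obtain ⟨s₁, hs₁⟩ := (hu.hasSum.eventually (Ioi_mem_nhds
    (show (∑' b : B, (u (b:ℝ))^2) - δ < ∑' b : B, (u (b:ℝ))^2 by linarith))).exists
  obtain ⟨s₂, hs₂⟩ := (hsumξ.hasSum.eventually (Ioi_mem_nhds
    (show (∑' b : B, (ξ (b:ℝ))^2) - δ < ∑' b : B, (ξ (b:ℝ))^2 by linarith))).exists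
  set s₀ : Finset B := s₁ ∪ s₂ with hs₀def
  have hs₀u : (∑' b : B, (u (b:ℝ))^2) - δ < ∑ b ∈ s₀, (u (b:ℝ))^2 :=
    lt_of_lt_of_le hs₁ (Finset.sum_le_sum_of_subset_of_nonneg Finset.subset_union_left
      (fun i _ _ => sq_nonneg _))
  have hs₀ξ : (∑' b : B, (ξ (b:ℝ))^2) - δ < ∑ b ∈ s₀, (ξ (b:ℝ))^2 :=
    lt_of_lt_of_le hs₂ (Finset.sum_le_sum_of_subset_of_nonneg Finset.subset_union_right
      (fun i _ _ => sq_nonneg _))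
  -- tails over finsets disjoint from s₀ are small
  have hu_tail : ∀ t : Finset B, Disjoint t s₀ → ∑ b ∈ t, (u (b:ℝ))^2 < δ := by
    intro t ht
    have h1 : ∑ b ∈ s₀ ∪ t, (u (b:ℝ))^2 ≤ ∑' b : B, (u (b:ℝ))^2 :=
      sum_le_hasSum _ (fun b _ => sq_nonneg _) hu.hasSum
    rw [Finset.sum_union ht.symm] at h1
    linarith
  have hξ_tail : ∀ t : Finset B, Disjoint t s₀ → ∑ b ∈ t, (ξ (b:ℝ))^2 < δ := by
    intro t ht
    have h1 : ∑ b ∈ s₀ ∪ t, (ξ (b:ℝ))^2 ≤ ∑' b : B, (ξ (b:ℝ))^2 :=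
      sum_le_hasSum _ (fun b _ => sq_nonneg _) hsumξ.hasSum
    rw [Finset.sum_union ht.symm] at h1
    linarith
  set F₀ : Finset ℝ := s₀.image Subtype.val with hF₀def
  have hF₀B : ↑F₀ ⊆ B := by
    intro x hx
    simp only [hF₀def, Finset.coe_image, Set.mem_image] at hx
    obtain ⟨b, _, rfl⟩ := hx
    exact b.2
  have hF₀s₀ : ∀ f : ℝ → ℝ, ∑ x ∈ F₀, f x = ∑ b ∈ s₀, f ↑b :=
    fun f => Finset.sum_image (fun x _ y _ h => Subtype.ext h)
  obtain ⟨m, hm⟩ := L2 F₀ hF₀B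
  -- |∑_{s₀} ξ u - S| ≤ δ
  have hES : |(∑ b ∈ s₀, ξ (b:ℝ) * u (b:ℝ)) - S| ≤ δ := by
    have hev : ∀ᶠ t : Finset B in atTop,
        (∑ b ∈ t, ξ (b:ℝ) * u (b:ℝ)) ∈ Metric.closedBall (∑ b ∈ s₀, ξ (b:ℝ) * u (b:ℝ)) δ := by
      filter_upwards [eventually_ge_atTop s₀] with t ht
      rw [Metric.mem_closedBall, Real.dist_eq]
      have hsplit : ∑ b ∈ t, ξ (b:ℝ) * u (b:ℝ) - ∑ b ∈ s₀, ξ (b:ℝ) * u (b:ℝ)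
          = ∑ b ∈ t \ s₀, ξ (b:ℝ) * u (b:ℝ) := by
        rw [sub_eq_iff_eq_add]
        exact (Finset.sum_sdiff ht).symm
      rw [hsplit]
      calc |∑ b ∈ t \ s₀, ξ (b:ℝ) * u (b:ℝ)|
          ≤ ∑ b ∈ t \ s₀, |ξ (b:ℝ) * u (b:ℝ)| := Finset.abs_sum_le_sum_abs _ _
        _ ≤ ∑ b ∈ t \ s₀, ((ξ (b:ℝ))^2 + (u (b:ℝ))^2)/2 :=
            Finset.sum_le_sum (fun b _ => amgm_abs _ _)
        _ = ((∑ b ∈ t \ s₀, (ξ (b:ℝ))^2) + ∑ b ∈ t \ s₀, (u (b:ℝ))^2)/2 := by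
            rw [← Finset.sum_add_distrib, ← Finset.sum_div]
        _ ≤ δ := by
            have h1 := hξ_tail (t \ s₀) (Finset.sdiff_disjoint)
            have h2 := hu_tail (t \ s₀) (Finset.sdiff_disjoint)
            linarith
    have hmem' : S ∈ Metric.closedBall (∑ b ∈ s₀, ξ (b:ℝ) * u (b:ℝ)) δ :=
      Metric.isClosed_closedBall.mem_of_tendsto hprod.hasSum hev
    rw [Metric.mem_closedBall, Real.dist_eq] at hmem'
    rwa [abs_sub_comm]
  -- convergence of the finite part
  have htd : Tendsto (fun n => ∑ b ∈ F₀, p n b * u b) atTop (𝓝 (∑ b ∈ F₀, ξ b * u b)) :=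
    tendsto_finset_sum _ (fun b hb => (L1 b (hB (hF₀B hb))).mul_const _)
  obtain ⟨N1, hN1⟩ := (Metric.tendsto_atTop.mp htd) (ε/3) (by positivity)
  refine ⟨max m N1, fun n hn => ?_⟩
  have hFsub : F₀ ⊆ Bn n := by
    intro x hx
    exact hmono (le_trans (le_max_left m N1) hn) (hm hx)
  -- term 1: the off-F₀ part, Cauchy-Schwarz
  set G : Finset ℝ := Bn n \ F₀ with hGdef
  have hGB : ↑G ⊆ B := fun x hx => hsub n (Finset.mem_sdiff.mp hx).1
  obtain ⟨G', hG'sum, hG'mem⟩ := toB G hGB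
  have hG'disj : Disjoint G' s₀ := by
    rw [Finset.disjoint_left]
    intro b hb hbs
    have h1 : (b:ℝ) ∈ G := hG'mem b hb
    have h2 : (b:ℝ) ∈ F₀ := Finset.mem_image_of_mem _ hbs
    exact (Finset.mem_sdiff.mp h1).2 h2
  have hu2G : ∑ x ∈ G, (u x)^2 < δ := by
    rw [← hG'sum (fun x => (u x)^2)]
    exact hu_tail G' hG'disj
  have hp2G : ∑ x ∈ G, (p n x)^2 ≤ C' := by
    refine le_trans (Finset.sum_le_sum_of_subset_of_nonneg (Finset.sdiff_subset)
      (fun i _ _ => sq_nonneg _)) (hC' n)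
  have hA : |∑ x ∈ G, p n x * u x| ≤ ε/3 := by
    have hcs : (∑ x ∈ G, p n x * u x)^2 ≤ (∑ x ∈ G, (p n x)^2) * ∑ x ∈ G, (u x)^2 :=
      Finset.sum_mul_sq_le_sq_mul_sq G _ _
    have hb1 : (∑ x ∈ G, (p n x)^2) * (∑ x ∈ G, (u x)^2) ≤ C' * δ := by
      have h0 : (0:ℝ) ≤ ∑ x ∈ G, (u x)^2 := Finset.sum_nonneg (fun i _ => sq_nonneg _)
      have h0' : (0:ℝ) ≤ ∑ x ∈ G, (p n x)^2 := Finset.sum_nonneg (fun i _ => sq_nonneg _)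
      nlinarith
    have hb2 : C' * δ ≤ (ε/3)^2 := by
      have h3 : δ * (C'+1) ≤ (ε/3)^2 := by
        rw [← le_div_iff₀ (by positivity)]
        exact hδ2
      nlinarith
    nlinarith [abs_nonneg (∑ x ∈ G, p n x * u x), sq_abs (∑ x ∈ G, p n x * u x)]
  -- assemble
  have hsplit : ∑ b ∈ Bn n, p n b * u b
      = (∑ x ∈ G, p n x * u x) + ∑ b ∈ F₀, p n b * u b := by
    rw [hGdef, Finset.sum_sdiff hFsub]
  have hD : |(∑ b ∈ F₀, p n b * u b) - ∑ b ∈ F₀, ξ b * u b| < ε/3 := by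
    have := hN1 n (le_trans (le_max_right m N1) hn)
    rwa [Real.dist_eq] at this
  have hE : |(∑ b ∈ F₀, ξ b * u b) - S| ≤ ε/3 := by
    rw [hF₀s₀ (fun x => ξ x * u x)]
    exact hES.trans (hδ1)
  rw [Real.dist_eq, hsplit]
  have habs : |(∑ x ∈ G, p n x * u x) + ∑ b ∈ F₀, p n b * u b - S|
      ≤ |∑ x ∈ G, p n x * u x| + |(∑ b ∈ F₀, p n b * u b) - ∑ b ∈ F₀, ξ b * u b|
        + |(∑ b ∈ F₀, ξ b * u b) - S| := by
    calc |(∑ x ∈ G, p n x * u x) + ∑ b ∈ F₀, p n b * u b - S|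
        = |(∑ x ∈ G, p n x * u x) + (((∑ b ∈ F₀, p n b * u b) - ∑ b ∈ F₀, ξ b * u b)
            + ((∑ b ∈ F₀, ξ b * u b) - S))| := by ring_nf
      _ ≤ _ := by
          refine le_trans (abs_add_le _ _) ?_
          have := abs_add_le ((∑ b ∈ F₀, p n b * u b) - ∑ b ∈ F₀, ξ b * u b)
            ((∑ b ∈ F₀, ξ b * u b) - S)
          linarith
  linarith
end

section
/- Under the assumptions of the scaled-model weak formulation on (0,1) with microstructure B, let b₀ ∈ B be an isolated point of B (not an accumulation point). Then the solution p is continuous at b₀, p restricted to small intervals (b₀−δ, b₀) and (b₀, b₀+δ) has second derivative −F in L², and the one-sided derivatives satisfy the flux jump condition p'(b₀⁻) − p'(b₀⁺) + β(b₀) p(b₀) = f(b₀). -/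
open MeasureTheory Filter Set Topology

lemma int_mul_of_L2 {μ : Measure ℝ} {f g : ℝ → ℝ} (hf : MemLp f 2 μ) (hg : MemLp g 2 μ) :
    Integrable (fun x => f x * g x) μ := by
  have h : (1 : ENNReal) / 1 = 1 / 2 + 1 / 2 := by rw [one_div, one_div, ENNReal.inv_two_add_inv_two, inv_one]
  have := MemLp.smul (r := 1) hg hf
  rw [memLp_one_iff_integrable] at this
  exact this.congr (Eventually.of_forall fun x => by simp [smul_eq_mul])

lemma swapFub (a c : ℝ) (F h : ℝ → ℝ) (hF : IntegrableOn F (Set.Ioo a c))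
    (hh : IntegrableOn h (Set.Ioo a c)) :
    ∫ x in Set.Ioo a c, F x * ∫ t in Set.Ioo a x, h t
      = ∫ t in Set.Ioo a c, h t * ∫ x in Set.Ioo t c, F x := by
  set μ := volume.restrict (Set.Ioo a c) with hμ
  set f : ℝ → ℝ → ℝ := fun x t => if t < x then F x * h t else 0 with hf
  have hmeas : MeasurableSet {q : ℝ × ℝ | q.2 < q.1} :=
    measurableSet_lt measurable_snd measurable_fst
  have hint : Integrable (Function.uncurry f) (μ.prod μ) := by
    have : Function.uncurry f
        = {q : ℝ × ℝ | q.2 < q.1}.indicator (fun z : ℝ × ℝ => F z.1 * h z.2) := by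
      funext z
      simp [Function.uncurry, hf, Set.indicator_apply]
    rw [this]
    exact (hF.mul_prod hh).indicator hmeas
  have swap := MeasureTheory.integral_integral_swap hint
  have lhs : ∀ x ∈ Set.Ioo a c, (∫ t, f x t ∂μ) = F x * ∫ t in Set.Ioo a x, h t := by
    intro x hx
    have : (fun t => f x t) = (Set.Iio x).indicator (fun t => F x * h t) := by
      funext t; simp [hf, Set.indicator_apply]
    rw [this, hμ, MeasureTheory.setIntegral_indicator measurableSet_Iio]
    have : Set.Ioo a c ∩ Set.Iio x = Set.Ioo a x := by
      ext t; constructor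
      · rintro ⟨⟨h1, _⟩, h3⟩; exact ⟨h1, h3⟩
      · rintro ⟨h1, h2⟩; exact ⟨⟨h1, h2.trans hx.2⟩, h2⟩
    rw [this, integral_const_mul]
  have rhs : ∀ t ∈ Set.Ioo a c, (∫ x, f x t ∂μ) = h t * ∫ x in Set.Ioo t c, F x := by
    intro t ht
    have : (fun x => f x t) = (Set.Ioi t).indicator (fun x => F x * h t) := by
      funext x; simp [hf, Set.indicator_apply]
    rw [this, hμ, MeasureTheory.setIntegral_indicator measurableSet_Ioi]
    have : Set.Ioo a c ∩ Set.Ioi t = Set.Ioo t c := by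
      ext x; constructor
      · rintro ⟨⟨_, h2⟩, h3⟩; exact ⟨h3, h2⟩
      · rintro ⟨h1, h2⟩; exact ⟨⟨ht.1.trans h1, h2⟩, h1⟩
    rw [this, MeasureTheory.integral_mul_const, mul_comm]
  calc ∫ x in Set.Ioo a c, F x * ∫ t in Set.Ioo a x, h t
      = ∫ x, (∫ t, f x t ∂μ) ∂μ := by
        rw [hμ]
        exact (MeasureTheory.setIntegral_congr_fun measurableSet_Ioo
          (fun x hx => (lhs x hx).symm))
    _ = ∫ t, (∫ x, f x t ∂μ) ∂μ := swap
    _ = ∫ t in Set.Ioo a c, h t * ∫ x in Set.Ioo t c, F x := by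
        rw [hμ]
        exact MeasureTheory.setIntegral_congr_fun measurableSet_Ioo rhs

lemma swapFub_one (a c : ℝ) (hac : a ≤ c) (F : ℝ → ℝ) (hF : IntegrableOn F (Set.Ioo a c)) :
    ∫ x in Set.Ioo a c, ∫ t in Set.Ioo a x, F t = ∫ t in Set.Ioo a c, F t * (c - t) := by
  have hconst : IntegrableOn (fun _ : ℝ => (1:ℝ)) (Set.Ioo a c) volume :=
    integrableOn_const (by simp [Real.volume_Ioo])
  have hswap := swapFub a c (fun _ => (1:ℝ)) F hconst hF
  simp only [one_mul] at hswap
  rw [hswap]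
  refine MeasureTheory.setIntegral_congr_fun measurableSet_Ioo (fun t ht => ?_)
  rw [MeasureTheory.setIntegral_const, smul_eq_mul, mul_one, measureReal_def, Real.volume_Ioo,
    ENNReal.toReal_ofReal (by linarith [ht.2] : (0:ℝ) ≤ c - t)]

lemma side_repr (B : Set ℝ) (β f : ℝ → ℝ)
    (F : ℝ → ℝ) (hF : MemLp F 2 (volume.restrict (Set.Ioo (0:ℝ) 1)))
    (p p' : ℝ → ℝ)
    (hmem : MemLp p' 2 (volume.restrict (Set.Ioo (0:ℝ) 1)))
    (hsol : ∀ q q' : ℝ → ℝ, MemLp q' 2 (volume.restrict (Set.Ioo (0:ℝ) 1)) →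
      (∀ x, q x = ∫ t in (0:ℝ)..x, q' t) →
      (∫ x in Set.Ioo (0:ℝ) 1, p' x * q' x)
          + (∑' b : B, β (b : ℝ) * p (b : ℝ) * q (b : ℝ))
        = (∫ x in Set.Ioo (0:ℝ) 1, F x * q x) + ∑' b : B, f (b : ℝ) * q (b : ℝ))
    (u v : ℝ) (hu : 0 < u) (huv : u < v) (hv : v < 1)
    (hBdisj : ∀ b ∈ B, b ∉ Set.Ioo u v) :
    ∃ m : ℝ, ∀ᵐ t ∂(volume.restrict (Set.Ioo u v)),
      p' t = m - ∫ s in u..t, F s := by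
  haveI : IsFiniteMeasure (volume.restrict (Set.Ioo (0:ℝ) 1)) :=
    ⟨by rw [Measure.restrict_apply_univ]; simp [Real.volume_Ioo]⟩
  haveI : IsFiniteMeasure (volume.restrict (Set.Ioo u v)) :=
    ⟨by rw [Measure.restrict_apply_univ]; simp [Real.volume_Ioo]⟩
  have hsub : Set.Ioo u v ⊆ Set.Ioo (0:ℝ) 1 := fun x hx => ⟨hu.trans hx.1, hx.2.trans hv⟩
  have hIccsub : Set.Icc u v ⊆ Set.Ioo (0:ℝ) 1 := fun x hx => ⟨hu.trans_le hx.1, hx.2.trans_lt hv⟩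
  have hFi : IntegrableOn F (Set.Ioo 0 1) := hF.integrable one_le_two
  have hpi : IntegrableOn p' (Set.Ioo 0 1) := hmem.integrable one_le_two
  have hvu : (0:ℝ) < v - u := sub_pos.2 huv
  set G : ℝ → ℝ := fun t => ∫ s in u..t, F s with hGdef
  have hFIcc : IntegrableOn F (Set.Icc u v) := hFi.mono_set hIccsub
  have hGcont : ContinuousOn G (Set.Icc u v) := by
    have := intervalIntegral.continuousOn_primitive_interval
      (f := F) (μ := volume) (a := u) (b := v) (by rwa [Set.uIcc_of_le huv.le])
    rwa [Set.uIcc_of_le huv.le] at this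
  have hGint : IntegrableOn G (Set.Ioo u v) :=
    (hGcont.integrableOn_compact isCompact_Icc).mono_set Set.Ioo_subset_Icc_self
  obtain ⟨C, hC⟩ := isCompact_Icc.exists_bound_of_continuousOn hGcont
  have hC0 : 0 ≤ C := le_trans (norm_nonneg _) (hC u ⟨le_rfl, huv.le⟩)
  set g : ℝ → ℝ := fun t => p' t + G t with hgdef
  have hgint : IntegrableOn g (Set.Ioo u v) := (hpi.mono_set hsub).add hGint
  set m : ℝ := (∫ t in Set.Ioo u v, g t) / (v - u) with hmdef
  set h : ℝ → ℝ := (Set.Ioo u v).indicator (fun t => g t - m) with hhdef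
  have hgmint : IntegrableOn (fun t => g t - m) (Set.Ioo u v) :=
    hgint.sub (integrableOn_const (by simp [Real.volume_Ioo]))
  -- L² facts
  have hGaesm : AEStronglyMeasurable (fun t => G t - m) (volume.restrict (Set.Ioo u v)) :=
    ((hGcont.sub continuousOn_const).aestronglyMeasurable measurableSet_Icc).mono_measure
      (Measure.restrict_mono Set.Ioo_subset_Icc_self le_rfl)
  have hGm2 : MemLp (fun t => G t - m) 2 (volume.restrict (Set.Ioo u v)) := by
    refine MemLp.of_bound hGaesm (C + |m|) ?_
    refine (ae_restrict_iff' measurableSet_Ioo).2 (Eventually.of_forall fun x hx => ?_)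
    calc ‖G x - m‖ ≤ ‖G x‖ + ‖m‖ := norm_sub_le _ _
      _ ≤ C + |m| := add_le_add (hC x (Set.Ioo_subset_Icc_self hx)) (by simp [Real.norm_eq_abs])
  have hp2uv : MemLp p' 2 (volume.restrict (Set.Ioo u v)) :=
    hmem.mono_measure (Measure.restrict_mono hsub le_rfl)
  have hgm2 : MemLp (fun t => g t - m) 2 (volume.restrict (Set.Ioo u v)) := by
    have e : (fun t => g t - m) = fun t => p' t + (G t - m) := by
      funext t; simp only [hgdef]; ring
    rw [e]; exact hp2uv.add hGm2
  have hhmem : MemLp h 2 (volume.restrict (Set.Ioo (0:ℝ) 1)) := by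
    have h1 : MemLp ((Set.Ioo u v).indicator p') 2 (volume.restrict (Set.Ioo (0:ℝ) 1)) :=
      hmem.indicator measurableSet_Ioo
    have h2 : MemLp ((Set.Ioo u v).indicator (fun t => G t - m)) 2
        (volume.restrict (Set.Ioo (0:ℝ) 1)) := by
      refine MemLp.of_bound ?_ (C + |m|) ?_
      · refine (aestronglyMeasurable_indicator_iff measurableSet_Ioo).2 ?_
        rw [Measure.restrict_restrict measurableSet_Ioo,
          Set.inter_eq_self_of_subset_left hsub]
        exact hGaesm
      · refine Eventually.of_forall fun x => ?_
        by_cases hx : x ∈ Set.Ioo u v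
        · rw [Set.indicator_of_mem hx]
          calc ‖G x - m‖ ≤ ‖G x‖ + ‖m‖ := norm_sub_le _ _
            _ ≤ C + |m| := add_le_add (hC x (Set.Ioo_subset_Icc_self hx))
                (by simp [Real.norm_eq_abs])
        · rw [Set.indicator_of_notMem hx]
          simpa using add_nonneg hC0 (abs_nonneg m)
    have e : h = fun t => (Set.Ioo u v).indicator p' t
        + (Set.Ioo u v).indicator (fun t => G t - m) t := by
      funext t
      by_cases ht : t ∈ Set.Ioo u v
      · simp [hhdef, hgdef, Set.indicator_of_mem ht, add_sub_assoc]
      · simp [hhdef, Set.indicator_of_notMem ht]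
    rw [e]; exact h1.add h2
  have hhint : Integrable h volume := (integrable_indicator_iff measurableSet_Ioo).2 hgmint
  set q : ℝ → ℝ := fun x => ∫ t in (0:ℝ)..x, h t with hqdef
  -- q vanishes off (u,v)
  have hq0 : ∀ x, x ≤ u → q x = 0 := by
    intro x hx
    have e : Set.EqOn h (fun _ => (0:ℝ)) (Set.uIcc 0 x) := by
      intro t ht
      refine Set.indicator_of_notMem (fun htm => ?_) _
      have h1 : t ≤ max 0 x := ht.2
      have : t ≤ u := h1.trans (max_le hu.le hx)
      exact absurd htm.1 (not_lt.2 this)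
    calc q x = ∫ t in (0:ℝ)..x, (0:ℝ) := intervalIntegral.integral_congr e
      _ = 0 := intervalIntegral.integral_zero
  have hmean : ∫ t in Set.Ioo u v, (g t - m) = 0 := by
    rw [integral_sub hgint (integrableOn_const (by simp [Real.volume_Ioo]))]
    rw [MeasureTheory.setIntegral_const, measureReal_def, Real.volume_Ioo, ENNReal.toReal_ofReal hvu.le,
      smul_eq_mul, hmdef]
    field_simp
    simp
  have hhuv : ∫ t in Set.Ioo u v, h t = 0 := by
    rw [hhdef, MeasureTheory.setIntegral_indicator measurableSet_Ioo, Set.inter_self]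
    exact hmean
  have hqv : q v = 0 := by
    have hadd := intervalIntegral.integral_add_adjacent_intervals (a := (0:ℝ)) (b := u)
      (c := v) (hhint.intervalIntegrable) (hhint.intervalIntegrable)
    have : q v = q u + ∫ t in u..v, h t := by rw [hqdef]; exact hadd.symm
    rw [this, hq0 u le_rfl, intervalIntegral.integral_of_le huv.le,
      MeasureTheory.integral_Ioc_eq_integral_Ioo, hhuv, zero_add]
  have hqout : ∀ x, x ∉ Set.Ioo u v → q x = 0 := by
    intro x hx
    rcases le_or_gt x u with hxu | hxu
    · exact hq0 x hxu
    · have hvx : v ≤ x := by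
        by_contra hc
        exact hx ⟨hxu, not_le.1 hc⟩
      have hadd := intervalIntegral.integral_add_adjacent_intervals (a := (0:ℝ)) (b := v)
        (c := x) (hhint.intervalIntegrable) (hhint.intervalIntegrable)
      have e : Set.EqOn h (fun _ => (0:ℝ)) (Set.uIcc v x) := by
        intro t ht
        refine Set.indicator_of_notMem (fun htm => ?_) _
        have h1 : min v x ≤ t := ht.1
        rw [min_eq_left hvx] at h1
        exact absurd htm.2 (not_lt.2 h1)
      have : q x = q v + ∫ t in v..x, h t := by rw [hqdef]; exact hadd.symm
      rw [this, hqv, intervalIntegral.integral_congr e, intervalIntegral.integral_zero]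
      simp
  -- value of q inside (u,v)
  have hqin : ∀ x ∈ Set.Ioo u v, q x = ∫ t in Set.Ioo u x, (g t - m) := by
    intro x hx
    have hadd := intervalIntegral.integral_add_adjacent_intervals (a := (0:ℝ)) (b := u)
      (c := x) (hhint.intervalIntegrable) (hhint.intervalIntegrable)
    have e1 : q x = q u + ∫ t in u..x, h t := by rw [hqdef]; exact hadd.symm
    rw [e1, hq0 u le_rfl, zero_add, intervalIntegral.integral_of_le hx.1.le,
      MeasureTheory.integral_Ioc_eq_integral_Ioo, hhdef,
      MeasureTheory.setIntegral_indicator measurableSet_Ioo,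
      Set.inter_eq_self_of_subset_left (Set.Ioo_subset_Ioo le_rfl hx.2.le)]
  -- the weak formulation with test function q
  have hqB : ∀ b : B, q (b : ℝ) = 0 := fun b => hqout _ (hBdisj b b.2)
  have key := hsol q h hhmem (fun x => rfl)
  have hts1 : (∑' b : B, β (b : ℝ) * p (b : ℝ) * q (b : ℝ)) = 0 := by
    rw [tsum_congr (fun b => by rw [hqB b, mul_zero])]
    exact tsum_zero
  have hts2 : (∑' b : B, f (b : ℝ) * q (b : ℝ)) = 0 := by
    rw [tsum_congr (fun b => by rw [hqB b, mul_zero])]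
    exact tsum_zero
  rw [hts1, hts2, add_zero, add_zero] at key
  -- reduce both integrals to (u,v)
  have LHSred : ∫ x in Set.Ioo (0:ℝ) 1, p' x * h x = ∫ t in Set.Ioo u v, p' t * (g t - m) := by
    have e : Set.EqOn (fun x => p' x * h x)
        ((Set.Ioo u v).indicator (fun x => p' x * (g x - m))) (Set.Ioo (0:ℝ) 1) := by
      intro x _
      by_cases hx : x ∈ Set.Ioo u v
      · simp [hhdef, Set.indicator_of_mem hx]
      · simp [hhdef, Set.indicator_of_notMem hx]
    rw [MeasureTheory.setIntegral_congr_fun measurableSet_Ioo e,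
      MeasureTheory.setIntegral_indicator measurableSet_Ioo,
      Set.inter_eq_self_of_subset_right hsub]
  have RHSred : ∫ x in Set.Ioo (0:ℝ) 1, F x * q x
      = ∫ x in Set.Ioo u v, F x * ∫ t in Set.Ioo u x, (g t - m) := by
    have e : Set.EqOn (fun x => F x * q x)
        ((Set.Ioo u v).indicator (fun x => F x * q x)) (Set.Ioo (0:ℝ) 1) := by
      intro x _
      by_cases hx : x ∈ Set.Ioo u v
      · simp only [Set.indicator_of_mem hx]
      · simp only [Set.indicator_of_notMem hx, hqout x hx, mul_zero]
    rw [MeasureTheory.setIntegral_congr_fun measurableSet_Ioo e,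
      MeasureTheory.setIntegral_indicator measurableSet_Ioo,
      Set.inter_eq_self_of_subset_right hsub]
    exact MeasureTheory.setIntegral_congr_fun measurableSet_Ioo
      (fun x hx => by simp only [hqin x hx])
  rw [LHSred, RHSred] at key
  rw [swapFub u v F (fun t => g t - m) (hFi.mono_set hsub) hgmint] at key
  -- rewrite the inner integral of F
  set Cc : ℝ := ∫ s in u..v, F s with hCcdef
  have hFII : ∀ x y : ℝ, x ∈ Set.Icc u v → y ∈ Set.Icc u v →
      IntervalIntegrable F volume x y := by
    intro x y hx hy
    rw [intervalIntegrable_iff]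
    refine hFi.mono_set (fun t ht => ?_)
    refine ⟨lt_of_lt_of_le (lt_of_lt_of_le hu (le_min hx.1 hy.1)) ht.1.le, ?_⟩
    exact lt_of_le_of_lt ht.2 (lt_of_le_of_lt (max_le hx.2 hy.2) hv)
  have hIoo_t : ∀ t ∈ Set.Ioo u v, ∫ x in Set.Ioo t v, F x = Cc - G t := by
    intro t ht
    have hadd := intervalIntegral.integral_add_adjacent_intervals (a := u) (b := t) (c := v)
      (hFII u t ⟨le_rfl, huv.le⟩ ⟨ht.1.le, ht.2.le⟩)
      (hFII t v ⟨ht.1.le, ht.2.le⟩ ⟨huv.le, le_rfl⟩)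
    have e : ∫ x in Set.Ioo t v, F x = ∫ s in t..v, F s := by
      rw [intervalIntegral.integral_of_le ht.2.le, MeasureTheory.integral_Ioc_eq_integral_Ioo]
    rw [e, hCcdef, hGdef]
    simp only [← hadd]
    ring
  have RHS3 : ∫ t in Set.Ioo u v, (g t - m) * ∫ x in Set.Ioo t v, F x
      = ∫ t in Set.Ioo u v, (g t - m) * (Cc - G t) :=
    MeasureTheory.setIntegral_congr_fun measurableSet_Ioo
      (fun t ht => by simp only [hIoo_t t ht])
  rw [RHS3] at key
  -- orthogonality: integral of the square vanishes
  have hCcG2 : MemLp (fun t => Cc - G t) 2 (volume.restrict (Set.Ioo u v)) := by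
    refine MemLp.of_bound ?_ (|Cc| + C) ?_
    · exact ((continuousOn_const.sub hGcont).aestronglyMeasurable measurableSet_Icc).mono_measure
        (Measure.restrict_mono Set.Ioo_subset_Icc_self le_rfl)
    · refine (ae_restrict_iff' measurableSet_Ioo).2 (Eventually.of_forall fun x hx => ?_)
      calc ‖Cc - G x‖ ≤ ‖Cc‖ + ‖G x‖ := norm_sub_le _ _
        _ ≤ |Cc| + C := add_le_add (le_of_eq (Real.norm_eq_abs _)) (hC x (Set.Ioo_subset_Icc_self hx))
  have hint1 : Integrable (fun t => p' t * (g t - m)) (volume.restrict (Set.Ioo u v)) :=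
    int_mul_of_L2 hp2uv hgm2
  have hint2 : Integrable (fun t => (g t - m) * (Cc - G t)) (volume.restrict (Set.Ioo u v)) :=
    int_mul_of_L2 hgm2 hCcG2
  have hzero : ∫ t in Set.Ioo u v, (p' t * (g t - m) - (g t - m) * (Cc - G t)) = 0 := by
    rw [integral_sub hint1 hint2, key, sub_self]
  have hre : (fun t => p' t * (g t - m) - (g t - m) * (Cc - G t))
      = fun t => (g t - m)^2 + (m - Cc) * (g t - m) := by
    funext t
    simp only [hgdef]
    ring
  rw [hre] at hzero
  have hsqint : Integrable (fun t => (g t - m)^2) (volume.restrict (Set.Ioo u v)) :=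
    hgm2.integrable_sq
  have hcmint : Integrable (fun t => (m - Cc) * (g t - m)) (volume.restrict (Set.Ioo u v)) :=
    hgmint.const_mul _
  rw [integral_add hsqint hcmint, MeasureTheory.integral_const_mul, hmean, mul_zero,
    add_zero] at hzero
  have hae := (integral_eq_zero_iff_of_nonneg (fun t => sq_nonneg _) hsqint).1 hzero
  refine ⟨m, ?_⟩
  filter_upwards [hae] with t ht
  have h1 : (g t - m)^2 = 0 := ht
  have h2 : g t = m := by
    have := pow_eq_zero_iff (n := 2) (by norm_num) |>.1 h1
    linarith [this]
  have h3 : p' t + G t = m := h2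
  rw [hGdef] at h3
  linarith [h3]

/-- at an isolated point b₀ of the microstructure B, the solution p of the
scaled model is continuous, p' has an L² representative w with second-derivative −F (i.e.
w(y) = w(x) − ∫ₓʸ F) on each side of b₀, the one-sided limits p'(b₀⁻), p'(b₀⁺) exist and
the flux jump condition p'(b₀⁻) − p'(b₀⁺) + β(b₀) p(b₀) = f(b₀) holds. -/
theorem stmt17 (B : Set ℝ) (hBcount : B.Countable) (hB : B ⊆ Set.Ioo (0:ℝ) 1)
    (β f : ℝ → ℝ)
    (hβsum : Summable (fun b : B => |β (b : ℝ)|))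
    (hfsum : Summable (fun b : B => |f (b : ℝ)|))
    (F : ℝ → ℝ) (hF : MemLp F 2 (volume.restrict (Set.Ioo (0:ℝ) 1)))
    (p p' : ℝ → ℝ)
    (hmem : MemLp p' 2 (volume.restrict (Set.Ioo (0:ℝ) 1)))
    (hrep : ∀ x, p x = ∫ t in (0:ℝ)..x, p' t)
    (hsol : ∀ q q' : ℝ → ℝ, MemLp q' 2 (volume.restrict (Set.Ioo (0:ℝ) 1)) →
      (∀ x, q x = ∫ t in (0:ℝ)..x, q' t) →
      (∫ x in Set.Ioo (0:ℝ) 1, p' x * q' x)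
          + (∑' b : B, β (b : ℝ) * p (b : ℝ) * q (b : ℝ))
        = (∫ x in Set.Ioo (0:ℝ) 1, F x * q x) + ∑' b : B, f (b : ℝ) * q (b : ℝ))
    (b₀ : ℝ) (hb₀ : b₀ ∈ B)
    (hiso : ∃ δ₀ > (0:ℝ), Set.Ioo (b₀ - δ₀) (b₀ + δ₀) ∩ B = {b₀}) :
    ContinuousAt p b₀ ∧
    ∃ δ > (0:ℝ), ∃ w : ℝ → ℝ, ∃ pl pr : ℝ,
      (w =ᵐ[volume.restrict (Set.Ioo (b₀ - δ) (b₀ + δ))] p') ∧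
      (∀ x ∈ Set.Ioo (b₀ - δ) b₀, ∀ y ∈ Set.Ioo (b₀ - δ) b₀,
        w y = w x - ∫ t in x..y, F t) ∧
      (∀ x ∈ Set.Ioo b₀ (b₀ + δ), ∀ y ∈ Set.Ioo b₀ (b₀ + δ),
        w y = w x - ∫ t in x..y, F t) ∧
      Tendsto w (𝓝[<] b₀) (𝓝 pl) ∧ Tendsto w (𝓝[>] b₀) (𝓝 pr) ∧
      pl - pr + β b₀ * p b₀ = f b₀ := by
  haveI : IsFiniteMeasure (volume.restrict (Set.Ioo (0:ℝ) 1)) :=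
    ⟨by rw [Measure.restrict_apply_univ]; simp [Real.volume_Ioo]⟩
  obtain ⟨δ₀, hδ₀, hiso'⟩ := hiso
  have hb₀01 : b₀ ∈ Set.Ioo (0:ℝ) 1 := hB hb₀
  set δ : ℝ := min δ₀ (min b₀ (1 - b₀)) / 2 with hδdef
  have hδpos : 0 < δ := by
    have h1 : 0 < min δ₀ (min b₀ (1 - b₀)) :=
      lt_min hδ₀ (lt_min hb₀01.1 (by linarith [hb₀01.2]))
    positivity
  have hδδ₀ : δ < δ₀ := by
    have : min δ₀ (min b₀ (1 - b₀)) ≤ δ₀ := min_le_left _ _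
    rw [hδdef]; linarith
  have hδb : δ < b₀ := by
    have : min δ₀ (min b₀ (1 - b₀)) ≤ b₀ := le_trans (min_le_right _ _) (min_le_left _ _)
    rw [hδdef]; linarith [hb₀01.1]
  have hδ1 : δ < 1 - b₀ := by
    have : min δ₀ (min b₀ (1 - b₀)) ≤ 1 - b₀ := le_trans (min_le_right _ _) (min_le_right _ _)
    rw [hδdef]; linarith [hb₀01.2]
  have ha₁pos : 0 < b₀ - δ := by linarith
  have hc₁lt : b₀ + δ < 1 := by linarith
  have hpi : IntegrableOn p' (Set.Ioo 0 1) := hmem.integrable one_le_two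
  have hFi : IntegrableOn F (Set.Ioo 0 1) := hF.integrable one_le_two
  have hsep : ∀ b ∈ B, b ≠ b₀ → b ∉ Set.Ioo (b₀ - δ₀) (b₀ + δ₀) := by
    intro b hb hne hmem'
    have hbb : b ∈ Set.Ioo (b₀ - δ₀) (b₀ + δ₀) ∩ B := ⟨hmem', hb⟩
    rw [hiso'] at hbb
    exact hne hbb
  -- interval integrability helper
  have hFIIg : ∀ x y : ℝ, x ∈ Set.Icc (b₀ - δ) (b₀ + δ) → y ∈ Set.Icc (b₀ - δ) (b₀ + δ) →
      IntervalIntegrable F volume x y := by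
    intro x y hx hy
    rw [intervalIntegrable_iff]
    refine hFi.mono_set (fun t ht => ?_)
    refine ⟨lt_of_lt_of_le (lt_of_lt_of_le ha₁pos (le_min hx.1 hy.1)) ht.1.le, ?_⟩
    exact lt_of_le_of_lt ht.2 (lt_of_le_of_lt (max_le hx.2 hy.2) hc₁lt)
  -- the two one-sided representations
  obtain ⟨m₁, hm₁⟩ := side_repr B β f F hF p p' hmem hsol (b₀ - δ) b₀ ha₁pos
    (by linarith) hb₀01.2
    (by
      intro b hb hmem'
      rcases eq_or_ne b b₀ with rfl | hne
      · exact absurd hmem'.2 (lt_irrefl _)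
      · exact hsep b hb hne ⟨by linarith [hmem'.1], by linarith [hmem'.2, hδ₀]⟩)
  obtain ⟨m₂, hm₂⟩ := side_repr B β f F hF p p' hmem hsol b₀ (b₀ + δ) hb₀01.1
    (by linarith) hc₁lt
    (by
      intro b hb hmem'
      rcases eq_or_ne b b₀ with rfl | hne
      · exact absurd hmem'.1 (lt_irrefl _)
      · exact hsep b hb hne ⟨by linarith [hmem'.1, hδ₀], by linarith [hmem'.2]⟩)
  -- continuity of p at b₀
  have hcont : ContinuousAt p b₀ := by
    have hfun : p = fun x => ∫ t in (0:ℝ)..x, p' t := funext hrep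
    rw [hfun]
    refine ContinuousWithinAt.continuousAt ?_
      (Icc_mem_nhds (show b₀ - δ < b₀ by linarith) (show b₀ < b₀ + δ by linarith))
    refine intervalIntegral.continuousWithinAt_primitive (measure_singleton b₀) ?_
    rw [min_eq_left ha₁pos.le, max_eq_right (by linarith : (0:ℝ) ≤ b₀ + δ),
      intervalIntegrable_iff, Set.uIoc_of_le (by linarith : (0:ℝ) ≤ b₀ + δ)]
    exact hpi.mono_set (fun t ht => ⟨ht.1, lt_of_le_of_lt ht.2 hc₁lt⟩)
  set w : ℝ → ℝ := fun x =>
    if x < b₀ then m₁ - ∫ s in (b₀ - δ)..x, F s else m₂ - ∫ s in b₀..x, F s with hwdef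
  refine ⟨hcont, δ, hδpos, w, m₁ - ∫ s in (b₀ - δ)..b₀, F s, m₂, ?_, ?_, ?_, ?_, ?_, ?_⟩
  · -- a.e. equality
    have hL : volume ({x | ¬ w x = p' x} ∩ Set.Ioo (b₀ - δ) b₀) = 0 := by
      have hae : ∀ᵐ t ∂(volume.restrict (Set.Ioo (b₀ - δ) b₀)), w t = p' t := by
        filter_upwards [hm₁, ae_restrict_mem measurableSet_Ioo] with t h1 h2
        rw [hwdef]; simp only [if_pos h2.2]; rw [h1]
      have := ae_iff.1 hae
      rwa [Measure.restrict_apply' measurableSet_Ioo] at this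
    have hR : volume ({x | ¬ w x = p' x} ∩ Set.Ioo b₀ (b₀ + δ)) = 0 := by
      have hae : ∀ᵐ t ∂(volume.restrict (Set.Ioo b₀ (b₀ + δ))), w t = p' t := by
        filter_upwards [hm₂, ae_restrict_mem measurableSet_Ioo] with t h1 h2
        rw [hwdef]; simp only [if_neg (not_lt.2 h2.1.le)]; rw [h1]
      have := ae_iff.1 hae
      rwa [Measure.restrict_apply' measurableSet_Ioo] at this
    rw [Filter.EventuallyEq, ae_iff, Measure.restrict_apply' measurableSet_Ioo]
    refine measure_mono_null (fun x hx => ?_)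
      (measure_union_null (measure_union_null hL hR) (measure_singleton b₀))
    rcases hx with ⟨hbad, hmem'⟩
    rcases lt_trichotomy x b₀ with h | h | h
    · exact Or.inl (Or.inl ⟨hbad, hmem'.1, h⟩)
    · exact Or.inr h
    · exact Or.inl (Or.inr ⟨hbad, h, hmem'.2⟩)
  · -- left second-derivative identity
    intro x hx y hy
    have hadd := intervalIntegral.integral_add_adjacent_intervals (a := b₀ - δ) (b := x)
      (c := y) (hFIIg _ _ ⟨le_rfl, by linarith⟩ ⟨hx.1.le, by linarith [hx.2]⟩)
      (hFIIg _ _ ⟨hx.1.le, by linarith [hx.2]⟩ ⟨hy.1.le, by linarith [hy.2]⟩)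
    rw [hwdef]
    simp only [if_pos hx.2, if_pos hy.2]
    linarith [hadd]
  · -- right second-derivative identity
    intro x hx y hy
    have hadd := intervalIntegral.integral_add_adjacent_intervals (a := b₀) (b := x)
      (c := y) (hFIIg _ _ ⟨by linarith, by linarith⟩ ⟨by linarith [hx.1], hx.2.le⟩)
      (hFIIg _ _ ⟨by linarith [hx.1], hx.2.le⟩ ⟨by linarith [hy.1], hy.2.le⟩)
    rw [hwdef]
    simp only [if_neg (not_lt.2 hx.1.le), if_neg (not_lt.2 hy.1.le)]
    linarith [hadd]
  · -- left limit
    have hc : ContinuousWithinAt (fun x => ∫ s in (b₀ - δ)..x, F s) (Set.Icc (b₀ - δ) b₀) b₀ := by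
      refine intervalIntegral.continuousWithinAt_primitive (measure_singleton b₀) ?_
      rw [min_self, max_eq_right (by linarith : b₀ - δ ≤ b₀)]
      exact hFIIg _ _ ⟨le_rfl, by linarith⟩ ⟨by linarith, by linarith⟩
    have htd : Tendsto (fun x => m₁ - ∫ s in (b₀ - δ)..x, F s) (𝓝[<] b₀)
        (𝓝 (m₁ - ∫ s in (b₀ - δ)..b₀, F s)) := by
      have h1 : Tendsto (fun x => m₁ - ∫ s in (b₀ - δ)..x, F s) (𝓝[Set.Icc (b₀ - δ) b₀] b₀)
          (𝓝 (m₁ - ∫ s in (b₀ - δ)..b₀, F s)) := tendsto_const_nhds.sub hc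
      have h2 : 𝓝[<] b₀ = 𝓝[Set.Ioo (b₀ - δ) b₀] b₀ :=
        (nhdsWithin_Ioo_eq_nhdsLT (by linarith : b₀ - δ < b₀)).symm
      rw [h2]
      exact h1.mono_left (nhdsWithin_mono _ Set.Ioo_subset_Icc_self)
    refine Tendsto.congr' ?_ htd
    filter_upwards [self_mem_nhdsWithin] with x hx
    rw [hwdef]; simp only [if_pos (Set.mem_Iio.1 hx)]
  · -- right limit
    have hc : ContinuousWithinAt (fun x => ∫ s in b₀..x, F s) (Set.Icc b₀ (b₀ + δ)) b₀ := by
      refine intervalIntegral.continuousWithinAt_primitive (measure_singleton b₀) ?_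
      rw [min_self, max_eq_right (by linarith : b₀ ≤ b₀ + δ)]
      exact hFIIg _ _ ⟨by linarith, by linarith⟩ ⟨by linarith, le_rfl⟩
    have htd : Tendsto (fun x => m₂ - ∫ s in b₀..x, F s) (𝓝[>] b₀) (𝓝 m₂) := by
      have h1 : Tendsto (fun x => m₂ - ∫ s in b₀..x, F s) (𝓝[Set.Icc b₀ (b₀ + δ)] b₀)
          (𝓝 (m₂ - ∫ s in b₀..b₀, F s)) := tendsto_const_nhds.sub hc
      rw [intervalIntegral.integral_same, sub_zero] at h1
      have h2 : 𝓝[>] b₀ = 𝓝[Set.Ioo b₀ (b₀ + δ)] b₀ :=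
        (nhdsWithin_Ioo_eq_nhdsGT (by linarith : b₀ < b₀ + δ)).symm
      rw [h2]
      exact h1.mono_left (nhdsWithin_mono _ Set.Ioo_subset_Icc_self)
    refine Tendsto.congr' ?_ htd
    filter_upwards [self_mem_nhdsWithin] with x hx
    rw [hwdef]; simp only [if_neg (not_lt.2 (Set.mem_Ioi.1 hx).le)]
  · -- jump condition
    have hδne : δ ≠ 0 := ne_of_gt hδpos
    have hsubL : Set.Ioc (b₀ - δ) b₀ ⊆ Set.Ioo (0:ℝ) 1 :=
      fun t ht => ⟨lt_trans ha₁pos ht.1, lt_of_le_of_lt ht.2 hb₀01.2⟩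
    have hsubR : Set.Ioc b₀ (b₀ + δ) ⊆ Set.Ioo (0:ℝ) 1 :=
      fun t ht => ⟨lt_trans hb₀01.1 ht.1, lt_of_le_of_lt ht.2 hc₁lt⟩
    have hsubIcc : Set.Icc (b₀ - δ) (b₀ + δ) ⊆ Set.Ioo (0:ℝ) 1 :=
      fun t ht => ⟨lt_of_lt_of_le ha₁pos ht.1, lt_of_le_of_lt ht.2 hc₁lt⟩
    have hsubLoo : Set.Ioo (b₀ - δ) b₀ ⊆ Set.Ioo (0:ℝ) 1 :=
      fun t ht => ⟨lt_trans ha₁pos ht.1, lt_trans ht.2 hb₀01.2⟩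
    have hsubRoo : Set.Ioo b₀ (b₀ + δ) ⊆ Set.Ioo (0:ℝ) 1 :=
      fun t ht => ⟨lt_trans hb₀01.1 ht.1, lt_trans ht.2 hc₁lt⟩
    set I₁ : ℝ → ℝ := (Set.Ioc (b₀ - δ) b₀).indicator (fun _ => (1:ℝ)) with hI₁def
    set I₂ : ℝ → ℝ := (Set.Ioc b₀ (b₀ + δ)).indicator (fun _ => (1:ℝ)) with hI₂def
    set h2 : ℝ → ℝ := fun t => (I₁ t - I₂ t) / δ with hh2def
    set q2 : ℝ → ℝ := fun x => ∫ t in (0:ℝ)..x, h2 t with hq2def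
    have hI₁int : Integrable I₁ volume := by
      rw [hI₁def, integrable_indicator_iff measurableSet_Ioc]
      exact integrableOn_const (by simp [Real.volume_Ioc])
    have hI₂int : Integrable I₂ volume := by
      rw [hI₂def, integrable_indicator_iff measurableSet_Ioc]
      exact integrableOn_const (by simp [Real.volume_Ioc])
    have hh2int : Integrable h2 volume := (hI₁int.sub hI₂int).div_const δ
    have hq2cont : Continuous q2 := hh2int.continuous_primitive 0
    -- q2 vanishes to the left and right
    have hq2le : ∀ x, x ≤ b₀ - δ → q2 x = 0 := by
      intro x hx
      have e : Set.EqOn h2 (fun _ => (0:ℝ)) (Set.uIcc 0 x) := by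
        intro t ht
        have htle : t ≤ b₀ - δ := le_trans ht.2 (max_le ha₁pos.le hx)
        rw [hh2def]
        have e1 : I₁ t = 0 := Set.indicator_of_notMem (fun hm => absurd hm.1 (not_lt.2 htle)) _
        have e2 : I₂ t = 0 := Set.indicator_of_notMem
          (fun hm => absurd hm.1 (not_lt.2 (by linarith))) _
        simp [e1, e2]
      calc q2 x = ∫ t in (0:ℝ)..x, (0:ℝ) := intervalIntegral.integral_congr e
        _ = 0 := intervalIntegral.integral_zero
    -- general value formula for x ≥ 0
    have hq2val : ∀ x : ℝ, 0 ≤ x → q2 x =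
        ((volume (Set.Ioc 0 x ∩ Set.Ioc (b₀ - δ) b₀)).toReal
          - (volume (Set.Ioc 0 x ∩ Set.Ioc b₀ (b₀ + δ))).toReal) / δ := by
      intro x hx
      rw [hq2def]
      simp only []
      rw [intervalIntegral.integral_of_le hx, hh2def]
      simp only []
      rw [integral_div, integral_sub hI₁int.integrableOn hI₂int.integrableOn, hI₁def, hI₂def,
        MeasureTheory.setIntegral_indicator measurableSet_Ioc,
        MeasureTheory.setIntegral_indicator measurableSet_Ioc,
        MeasureTheory.setIntegral_const, MeasureTheory.setIntegral_const, measureReal_def, measureReal_def,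
        smul_eq_mul, mul_one, smul_eq_mul, mul_one]
    have hq2ge : ∀ x, b₀ + δ ≤ x → q2 x = 0 := by
      intro x hx
      rw [hq2val x (by linarith)]
      rw [Set.inter_eq_self_of_subset_right
          (Set.Ioc_subset_Ioc ha₁pos.le (by linarith : b₀ ≤ x)),
        Set.inter_eq_self_of_subset_right
          (Set.Ioc_subset_Ioc (by linarith : (0:ℝ) ≤ b₀) hx),
        Real.volume_Ioc, Real.volume_Ioc, ENNReal.toReal_ofReal (by linarith),
        ENNReal.toReal_ofReal (by linarith)]
      ring_nf
    have hq2b₀ : q2 b₀ = 1 := by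
      rw [hq2val b₀ hb₀01.1.le]
      have e1 : Set.Ioc 0 b₀ ∩ Set.Ioc (b₀ - δ) b₀ = Set.Ioc (b₀ - δ) b₀ :=
        Set.inter_eq_self_of_subset_right (Set.Ioc_subset_Ioc ha₁pos.le le_rfl)
      have e2 : Set.Ioc 0 b₀ ∩ Set.Ioc b₀ (b₀ + δ) = ∅ :=
        Set.eq_empty_iff_forall_notMem.2 (fun t ht => absurd ht.2.1 (not_lt.2 ht.1.2))
      rw [e1, e2, Real.volume_Ioc, ENNReal.toReal_ofReal (by linarith)]
      simp [hδne]
    have hq2inL : ∀ x ∈ Set.Ioc (b₀ - δ) b₀, q2 x = (x - (b₀ - δ)) / δ := by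
      intro x hx
      rw [hq2val x (by linarith [hx.1])]
      have e1 : Set.Ioc 0 x ∩ Set.Ioc (b₀ - δ) b₀ = Set.Ioc (b₀ - δ) x := by
        ext t
        constructor
        · rintro ⟨⟨_, h2⟩, ⟨h3, _⟩⟩; exact ⟨h3, h2⟩
        · rintro ⟨h3, h2⟩
          exact ⟨⟨lt_trans ha₁pos h3, h2⟩, h3, le_trans h2 hx.2⟩
      have e2 : Set.Ioc 0 x ∩ Set.Ioc b₀ (b₀ + δ) = ∅ :=
        Set.eq_empty_iff_forall_notMem.2
          (fun t ht => absurd ht.2.1 (not_lt.2 (le_trans ht.1.2 hx.2)))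
      rw [e1, e2, Real.volume_Ioc, ENNReal.toReal_ofReal (by linarith [hx.1])]
      simp
    have hq2inR : ∀ x ∈ Set.Ioo b₀ (b₀ + δ), q2 x = ((b₀ + δ) - x) / δ := by
      intro x hx
      rw [hq2val x (by linarith [hx.1, hb₀01.1])]
      have e1 : Set.Ioc 0 x ∩ Set.Ioc (b₀ - δ) b₀ = Set.Ioc (b₀ - δ) b₀ :=
        Set.inter_eq_self_of_subset_right (Set.Ioc_subset_Ioc ha₁pos.le hx.1.le)
      have e2 : Set.Ioc 0 x ∩ Set.Ioc b₀ (b₀ + δ) = Set.Ioc b₀ x := by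
        ext t
        constructor
        · rintro ⟨⟨_, h2⟩, ⟨h3, _⟩⟩; exact ⟨h3, h2⟩
        · rintro ⟨h3, h2⟩
          exact ⟨⟨lt_trans hb₀01.1 h3, h2⟩, h3, le_trans h2 hx.2.le⟩
      rw [e1, e2, Real.volume_Ioc, Real.volume_Ioc,
        ENNReal.toReal_ofReal (by linarith), ENNReal.toReal_ofReal (by linarith [hx.1])]
      congr 1
      ring
    -- membership of h2 in L²
    have hh2mem : MemLp h2 2 (volume.restrict (Set.Ioo (0:ℝ) 1)) := by
      refine MemLp.of_bound ?_ (2 / δ) ?_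
      · exact (((measurable_const.indicator measurableSet_Ioc).sub
          (measurable_const.indicator measurableSet_Ioc)).div_const δ).aestronglyMeasurable
      · refine Eventually.of_forall fun t => ?_
        rw [hh2def]
        simp only [Real.norm_eq_abs, abs_div, abs_of_pos hδpos]
        have b1 : |I₁ t| ≤ 1 := by
          rw [hI₁def]; by_cases h : t ∈ Set.Ioc (b₀ - δ) b₀ <;> simp [h]
        have b2 : |I₂ t| ≤ 1 := by
          rw [hI₂def]; by_cases h : t ∈ Set.Ioc b₀ (b₀ + δ) <;> simp [h]
        have hb : |I₁ t - I₂ t| ≤ 2 := by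
          calc |I₁ t - I₂ t| ≤ |I₁ t| + |I₂ t| := abs_sub _ _
            _ ≤ 2 := by linarith
        gcongr
    -- apply the weak formulation with the hat test function
    have key2 := hsol q2 h2 hh2mem (fun x => rfl)
    have hq2B : ∀ b' : B, (b' : ℝ) ≠ b₀ → q2 (b' : ℝ) = 0 := by
      intro b' hne
      have hout := hsep b' b'.2 hne
      rcases le_or_gt (b' : ℝ) (b₀ - δ₀) with h | h
      · exact hq2le _ (by linarith)
      · have h2' : b₀ + δ₀ ≤ (b' : ℝ) := by
          by_contra hc
          push_neg at hc
          exact hout ⟨by linarith, hc⟩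
        exact hq2ge _ (by linarith)
    have hts1 : (∑' b : B, β (b:ℝ) * p (b:ℝ) * q2 (b:ℝ)) = β b₀ * p b₀ := by
      have h0 : ∀ b' : B, b' ≠ (⟨b₀, hb₀⟩ : B) → β (b':ℝ) * p (b':ℝ) * q2 (b':ℝ) = 0 := by
        intro b' hne
        rw [hq2B b' (fun hc => hne (Subtype.ext hc)), mul_zero]
      rw [tsum_eq_single _ h0]
      simp [hq2b₀]
    have hts2 : (∑' b : B, f (b:ℝ) * q2 (b:ℝ)) = f b₀ := by
      have h0 : ∀ b' : B, b' ≠ (⟨b₀, hb₀⟩ : B) → f (b':ℝ) * q2 (b':ℝ) = 0 := by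
        intro b' hne
        rw [hq2B b' (fun hc => hne (Subtype.ext hc)), mul_zero]
      rw [tsum_eq_single _ h0]
      simp [hq2b₀]
    rw [hts1, hts2] at key2
    -- the left-hand integral
    have hLHS : ∫ x in Set.Ioo (0:ℝ) 1, p' x * h2 x
        = ((∫ t in Set.Ioc (b₀ - δ) b₀, p' t) - ∫ t in Set.Ioc b₀ (b₀ + δ), p' t) / δ := by
      have e : Set.EqOn (fun x => p' x * h2 x)
          (fun x => ((Set.Ioc (b₀ - δ) b₀).indicator p' x
            - (Set.Ioc b₀ (b₀ + δ)).indicator p' x) / δ) (Set.Ioo (0:ℝ) 1) := by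
        intro x _
        simp only [hh2def, hI₁def, hI₂def]
        by_cases h1 : x ∈ Set.Ioc (b₀ - δ) b₀ <;> by_cases hx2 : x ∈ Set.Ioc b₀ (b₀ + δ) <;>
          simp [h1, hx2, Set.indicator_of_mem, Set.indicator_of_notMem] <;> ring
      rw [MeasureTheory.setIntegral_congr_fun measurableSet_Ioo e, integral_div,
        integral_sub (hpi.indicator measurableSet_Ioc) (hpi.indicator measurableSet_Ioc),
        MeasureTheory.setIntegral_indicator measurableSet_Ioc,
        MeasureTheory.setIntegral_indicator measurableSet_Ioc,
        Set.inter_eq_self_of_subset_right hsubL, Set.inter_eq_self_of_subset_right hsubR]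
    -- representations of the one-sided integrals of p'
    have hPL : ∫ t in Set.Ioc (b₀ - δ) b₀, p' t
        = m₁ * δ - ∫ t in Set.Ioo (b₀ - δ) b₀, F t * (b₀ - t) := by
      have hGLcont : ContinuousOn (fun t => ∫ s in (b₀ - δ)..t, F s) (Set.Icc (b₀ - δ) b₀) := by
        have := intervalIntegral.continuousOn_primitive_interval (f := F) (μ := volume)
          (a := b₀ - δ) (b := b₀) (by
            rw [Set.uIcc_of_le (by linarith : b₀ - δ ≤ b₀)]
            exact hFi.mono_set (fun t ht =>
              ⟨lt_of_lt_of_le ha₁pos ht.1, lt_of_le_of_lt ht.2 hb₀01.2⟩))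
        rwa [Set.uIcc_of_le (by linarith : b₀ - δ ≤ b₀)] at this
      have hGLint : IntegrableOn (fun t => ∫ s in (b₀ - δ)..t, F s) (Set.Ioo (b₀ - δ) b₀) :=
        (hGLcont.integrableOn_compact isCompact_Icc).mono_set Set.Ioo_subset_Icc_self
      rw [MeasureTheory.integral_Ioc_eq_integral_Ioo, MeasureTheory.integral_congr_ae hm₁,
        integral_sub (integrableOn_const (μ := volume) (s := Set.Ioo (b₀ - δ) b₀) (C := m₁) (by simp [Real.volume_Ioo])) hGLint,
        MeasureTheory.setIntegral_const, measureReal_def, Real.volume_Ioo,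
        ENNReal.toReal_ofReal (by linarith : (0:ℝ) ≤ b₀ - (b₀ - δ)), smul_eq_mul]
      have e1 : ∫ t in Set.Ioo (b₀ - δ) b₀, (∫ s in (b₀ - δ)..t, F s)
          = ∫ t in Set.Ioo (b₀ - δ) b₀, ∫ s in Set.Ioo (b₀ - δ) t, F s := by
        refine MeasureTheory.setIntegral_congr_fun measurableSet_Ioo (fun t ht => ?_)
        rw [intervalIntegral.integral_of_le ht.1.le, MeasureTheory.integral_Ioc_eq_integral_Ioo]
      rw [e1, swapFub_one (b₀ - δ) b₀ (by linarith) F (hFi.mono_set hsubLoo)]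
      have e2 : b₀ - (b₀ - δ) = δ := by ring
      rw [e2, mul_comm]
    have hPR : ∫ t in Set.Ioc b₀ (b₀ + δ), p' t
        = m₂ * δ - ∫ t in Set.Ioo b₀ (b₀ + δ), F t * ((b₀ + δ) - t) := by
      have hGRcont : ContinuousOn (fun t => ∫ s in b₀..t, F s) (Set.Icc b₀ (b₀ + δ)) := by
        have := intervalIntegral.continuousOn_primitive_interval (f := F) (μ := volume)
          (a := b₀) (b := b₀ + δ) (by
            rw [Set.uIcc_of_le (by linarith : b₀ ≤ b₀ + δ)]
            exact hFi.mono_set (fun t ht =>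
              ⟨lt_of_lt_of_le hb₀01.1 ht.1, lt_of_le_of_lt ht.2 hc₁lt⟩))
        rwa [Set.uIcc_of_le (by linarith : b₀ ≤ b₀ + δ)] at this
      have hGRint : IntegrableOn (fun t => ∫ s in b₀..t, F s) (Set.Ioo b₀ (b₀ + δ)) :=
        (hGRcont.integrableOn_compact isCompact_Icc).mono_set Set.Ioo_subset_Icc_self
      rw [MeasureTheory.integral_Ioc_eq_integral_Ioo, MeasureTheory.integral_congr_ae hm₂,
        integral_sub (integrableOn_const (μ := volume) (s := Set.Ioo b₀ (b₀ + δ)) (C := m₂) (by simp [Real.volume_Ioo])) hGRint,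
        MeasureTheory.setIntegral_const, measureReal_def, Real.volume_Ioo,
        ENNReal.toReal_ofReal (by linarith : (0:ℝ) ≤ b₀ + δ - b₀), smul_eq_mul]
      have e1 : ∫ t in Set.Ioo b₀ (b₀ + δ), (∫ s in b₀..t, F s)
          = ∫ t in Set.Ioo b₀ (b₀ + δ), ∫ s in Set.Ioo b₀ t, F s := by
        refine MeasureTheory.setIntegral_congr_fun measurableSet_Ioo (fun t ht => ?_)
        rw [intervalIntegral.integral_of_le ht.1.le, MeasureTheory.integral_Ioc_eq_integral_Ioo]
      rw [e1, swapFub_one b₀ (b₀ + δ) (by linarith) F (hFi.mono_set hsubRoo)]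
      have e2 : b₀ + δ - b₀ = δ := by ring
      rw [e2, mul_comm]
    -- the right-hand integral
    have hFq2Icc : IntegrableOn (fun x => F x * q2 x) (Set.Icc (b₀ - δ) (b₀ + δ)) :=
      (hFi.mono_set hsubIcc).mul_continuousOn hq2cont.continuousOn isCompact_Icc
    have hsplit : Set.Ioo (b₀ - δ) (b₀ + δ) = Set.Ioc (b₀ - δ) b₀ ∪ Set.Ioo b₀ (b₀ + δ) := by
      ext t
      constructor
      · rintro ⟨h1, h2⟩
        rcases le_or_gt t b₀ with h | h
        · exact Or.inl ⟨h1, h⟩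
        · exact Or.inr ⟨h, h2⟩
      · rintro (⟨h1, h2⟩ | ⟨h1, h2⟩)
        · exact ⟨h1, lt_of_le_of_lt h2 (by linarith)⟩
        · exact ⟨by linarith [h1], h2⟩
    have hRHS : ∫ x in Set.Ioo (0:ℝ) 1, F x * q2 x
        = ((∫ t in Set.Ioo (b₀ - δ) b₀, F t * (t - (b₀ - δ)))
          + ∫ t in Set.Ioo b₀ (b₀ + δ), F t * ((b₀ + δ) - t)) / δ := by
      have e : Set.EqOn (fun x => F x * q2 x)
          ((Set.Ioo (b₀ - δ) (b₀ + δ)).indicator (fun x => F x * q2 x)) (Set.Ioo (0:ℝ) 1) := by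
        intro x _
        by_cases hx : x ∈ Set.Ioo (b₀ - δ) (b₀ + δ)
        · simp only [Set.indicator_of_mem hx]
        · have hz : q2 x = 0 := by
            rcases le_or_gt x (b₀ - δ) with h | h
            · exact hq2le x h
            · refine hq2ge x ?_
              by_contra hc
              push_neg at hc
              exact hx ⟨h, hc⟩
          simp only [Set.indicator_of_notMem hx, hz, mul_zero]
      rw [MeasureTheory.setIntegral_congr_fun measurableSet_Ioo e,
        MeasureTheory.setIntegral_indicator measurableSet_Ioo,
        Set.inter_eq_self_of_subset_right
          (fun t ht => hsubIcc (Set.Ioo_subset_Icc_self ht)),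
        hsplit,
        MeasureTheory.setIntegral_union
          (Set.disjoint_left.mpr (fun t h1 h2 => absurd h2.1 (not_lt.2 h1.2)))
          measurableSet_Ioo
          (hFq2Icc.mono_set (fun t ht => ⟨ht.1.le, by linarith [ht.2]⟩))
          (hFq2Icc.mono_set (fun t ht => ⟨by linarith [ht.1], ht.2.le⟩))]
      have t1 : ∫ x in Set.Ioc (b₀ - δ) b₀, F x * q2 x
          = (∫ t in Set.Ioo (b₀ - δ) b₀, F t * (t - (b₀ - δ))) / δ := by
        have e1 : Set.EqOn (fun x => F x * q2 x)
            (fun x => (F x * (x - (b₀ - δ))) / δ) (Set.Ioc (b₀ - δ) b₀) := by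
          intro x hx
          simp only []
          rw [hq2inL x hx, ← mul_div_assoc]
        rw [MeasureTheory.setIntegral_congr_fun measurableSet_Ioc e1, integral_div,
          MeasureTheory.integral_Ioc_eq_integral_Ioo]
      have t2 : ∫ x in Set.Ioo b₀ (b₀ + δ), F x * q2 x
          = (∫ t in Set.Ioo b₀ (b₀ + δ), F t * ((b₀ + δ) - t)) / δ := by
        have e1 : Set.EqOn (fun x => F x * q2 x)
            (fun x => (F x * ((b₀ + δ) - x)) / δ) (Set.Ioo b₀ (b₀ + δ)) := by
          intro x hx
          simp only []
          rw [hq2inR x hx, ← mul_div_assoc]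
        rw [MeasureTheory.setIntegral_congr_fun measurableSet_Ioo e1, integral_div]
      rw [t1, t2, ← add_div]
    -- the two Fubini integrals on the left combine to δ ∫ F
    have hAB : (∫ t in Set.Ioo (b₀ - δ) b₀, F t * (b₀ - t))
        + (∫ t in Set.Ioo (b₀ - δ) b₀, F t * (t - (b₀ - δ)))
        = δ * ∫ s in (b₀ - δ)..b₀, F s := by
      have hint1 : IntegrableOn (fun t => F t * (b₀ - t)) (Set.Ioo (b₀ - δ) b₀) :=
        ((hFi.mono_set hsubIcc).mul_continuousOn
          (continuous_const.sub continuous_id).continuousOn isCompact_Icc).mono_set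
          (fun t ht => ⟨ht.1.le, by linarith [ht.2]⟩)
      have hint2 : IntegrableOn (fun t => F t * (t - (b₀ - δ))) (Set.Ioo (b₀ - δ) b₀) :=
        ((hFi.mono_set hsubIcc).mul_continuousOn
          (continuous_id.sub continuous_const).continuousOn isCompact_Icc).mono_set
          (fun t ht => ⟨ht.1.le, by linarith [ht.2]⟩)
      rw [← integral_add hint1 hint2]
      have e : Set.EqOn (fun t => F t * (b₀ - t) + F t * (t - (b₀ - δ)))
          (fun t => F t * δ) (Set.Ioo (b₀ - δ) b₀) := by
        intro t _
        simp only []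
        ring
      rw [MeasureTheory.setIntegral_congr_fun measurableSet_Ioo e, integral_mul_const,
        intervalIntegral.integral_of_le (by linarith : b₀ - δ ≤ b₀),
        MeasureTheory.integral_Ioc_eq_integral_Ioo, mul_comm]
    -- final algebra
    rw [hLHS, hPL, hPR, hRHS] at key2
    have h1 : ((m₁ * δ - ∫ t in Set.Ioo (b₀ - δ) b₀, F t * (b₀ - t))
          - (m₂ * δ - ∫ t in Set.Ioo b₀ (b₀ + δ), F t * ((b₀ + δ) - t))) / δ
        - ((∫ t in Set.Ioo (b₀ - δ) b₀, F t * (t - (b₀ - δ)))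
          + ∫ t in Set.Ioo b₀ (b₀ + δ), F t * ((b₀ + δ) - t)) / δ
        = f b₀ - β b₀ * p b₀ := by linarith [key2]
    rw [div_sub_div_same] at h1
    have h2 : (m₁ * δ - ∫ t in Set.Ioo (b₀ - δ) b₀, F t * (b₀ - t))
          - (m₂ * δ - ∫ t in Set.Ioo b₀ (b₀ + δ), F t * ((b₀ + δ) - t))
          - ((∫ t in Set.Ioo (b₀ - δ) b₀, F t * (t - (b₀ - δ)))
            + ∫ t in Set.Ioo b₀ (b₀ + δ), F t * ((b₀ + δ) - t))
        = δ * (m₁ - m₂ - ∫ s in (b₀ - δ)..b₀, F s) := by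
      linear_combination -hAB
    rw [h2, mul_div_cancel_left₀ _ hδne] at h1
    linarith [h1]
end
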